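/- arXiv:2108.06719 — 5 statements merged into one kernel-verified Lean document; each statement's English description precedes it below -/
import Mathlib

section
/- Consider n agents with dynamics σ_i' = Sσ_i + Bχ_i, i = 1,…,n, under the perturbed consensus controller χ_i = −M Σ_{j∈N_i} a_{ij}(σ_i − σ_j) + M φ_i, where φ_i(t) ∈ ℝ^p is an external perturbation. Assume the directed weighted graph with adjacency matrix A = (a_{ij}) contains a spanning tree. If the gain matrix M is selected such that A_ζ = I_{n−1} ⊗ S − H ⊗ BM is Hurwitz, then limsup_{t→∞} ‖χ(t)‖ ≤ γ_χ · limsup_{t→∞} ‖φ(t)‖ for any bounded φ(t), where γ_χ = ‖M‖(‖LU‖·γ_ζ + 1) and γ_ζ = √(ϖ(Q))·‖Q(W ⊗ BM)‖ with Q = Qᵀ > 0 the solution of QA_ζ + A_ζᵀQ = −2I. (Lemma 2 of the paper.) -/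
set_option maxHeartbeats 1600000
set_option linter.unusedSectionVars false


open Filter Matrix Kronecker

/-- The `ℓ²`-operator norm of a real matrix (Euclidean norm for vectors). -/
noncomputable def opNorm {k l : Type*} [Fintype k] [Fintype l] [DecidableEq l]
    (A : Matrix k l ℝ) : ℝ :=
  ‖LinearMap.toContinuousLinearMap (Matrix.toEuclideanLin A)‖

/-- The maximum eigenvalue `λ_max(P)` of a (symmetric) real matrix. -/
noncomputable def eigMax {k : Type*} [Fintype k] [DecidableEq k]
    (P : Matrix k k ℝ) : ℝ := sSup (spectrum ℝ P)

/-- The minimum eigenvalue `λ_min(P)` of a (symmetric) real matrix. -/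
noncomputable def eigMin {k : Type*} [Fintype k] [DecidableEq k]
    (P : Matrix k k ℝ) : ℝ := sInf (spectrum ℝ P)

/-- The condition number `ϖ(P) = λ_max(P)/λ_min(P)`. -/
noncomputable def varpi {k : Type*} [Fintype k] [DecidableEq k]
    (P : Matrix k k ℝ) : ℝ := eigMax P / eigMin P

/-- A complex square matrix is Hurwitz if all its eigenvalues have negative real part. -/
def IsHurwitzC {k : Type*} [Fintype k] [DecidableEq k] (A : Matrix k k ℂ) : Prop :=
  ∀ μ ∈ spectrum ℂ A, μ.re < 0

/-- A real square matrix is Hurwitz if all its (complex) eigenvalues have negative real part. -/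
def IsHurwitz {k : Type*} [Fintype k] [DecidableEq k] (A : Matrix k k ℝ) : Prop :=
  IsHurwitzC (A.map Complex.ofReal)

/-- The directed weighted graph described by the adjacency matrix `A` (edge `(i,j)` present iff
`A i j > 0`, meaning agent `i` receives information from agent `j`) contains a (directed)
spanning tree: there is a root from which every vertex is reachable along directed edges. -/
def HasSpanningTree {n : ℕ} (A : Matrix (Fin n) (Fin n) ℝ) : Prop :=
  ∃ root : Fin n, ∀ i : Fin n, Relation.ReflTransGen (fun u v => 0 < A v u) root i





noncomputable def vnorm {ι : Type*} [Fintype ι] (x : ι → ℝ) : ℝ :=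
  ‖(WithLp.equiv 2 (ι → ℝ)).symm x‖

lemma vnorm_eq_sqrt {ι : Type*} [Fintype ι] (x : ι → ℝ) :
    vnorm x = Real.sqrt (∑ i, x i ^ 2) := by
  rw [vnorm, EuclideanSpace.norm_eq]
  congr 1
  refine Finset.sum_congr rfl fun i _ => ?_
  rw [Real.norm_eq_abs, sq_abs]
  rfl

lemma vnorm_nonneg {ι : Type*} [Fintype ι] (x : ι → ℝ) : 0 ≤ vnorm x := norm_nonneg _

lemma sq_vnorm {ι : Type*} [Fintype ι] (x : ι → ℝ) : vnorm x ^ 2 = ∑ i, x i ^ 2 := by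
  rw [vnorm_eq_sqrt, Real.sq_sqrt]
  positivity

lemma vnorm_add_le {ι : Type*} [Fintype ι] (x y : ι → ℝ) :
    vnorm (x + y) ≤ vnorm x + vnorm y := by
  simpa [vnorm] using norm_add_le ((WithLp.equiv 2 (ι → ℝ)).symm x) ((WithLp.equiv 2 (ι → ℝ)).symm y)

lemma vnorm_neg {ι : Type*} [Fintype ι] (x : ι → ℝ) : vnorm (-x) = vnorm x := by
  simpa [vnorm] using norm_neg ((WithLp.equiv 2 (ι → ℝ)).symm x)

lemma dotProduct_le_vnorm {ι : Type*} [Fintype ι] (x y : ι → ℝ) :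
    x ⬝ᵥ y ≤ vnorm x * vnorm y := by
  have h := real_inner_le_norm ((WithLp.equiv 2 (ι → ℝ)).symm x) ((WithLp.equiv 2 (ι → ℝ)).symm y)
  rw [PiLp.inner_apply] at h
  simpa [dotProduct, RCLike.inner_apply, vnorm, mul_comm] using h

lemma opNorm_nonneg {k l : Type*} [Fintype k] [Fintype l] [DecidableEq l]
    (A : Matrix k l ℝ) : 0 ≤ opNorm A := norm_nonneg _

lemma vnorm_mulVec_le {k l : Type*} [Fintype k] [Fintype l] [DecidableEq l]
    (A : Matrix k l ℝ) (x : l → ℝ) :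
    vnorm (A *ᵥ x) ≤ opNorm A * vnorm x := by
  have h := (LinearMap.toContinuousLinearMap (Matrix.toEuclideanLin A)).le_opNorm
    ((WithLp.equiv 2 (l → ℝ)).symm x)
  rw [LinearMap.coe_toContinuousLinearMap'] at h
  exact h

lemma sq_mulVec_le {k l : Type*} [Fintype k] [Fintype l] [DecidableEq l]
    (A : Matrix k l ℝ) (x : l → ℝ) :
    ∑ i, (A *ᵥ x) i ^ 2 ≤ opNorm A ^ 2 * ∑ j, x j ^ 2 := by
  have h := vnorm_mulVec_le A x
  have h2 := mul_self_le_mul_self (vnorm_nonneg (A *ᵥ x)) h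
  rw [← sq, ← sq, sq_vnorm, mul_pow, sq_vnorm] at h2
  exact h2

lemma sq_kron_mulVec_le {k l k' l' : Type*} [Fintype k] [Fintype l] [Fintype k'] [Fintype l']
    [DecidableEq l] [DecidableEq l']
    (A : Matrix k l ℝ) (M : Matrix k' l' ℝ) (x : l × l' → ℝ) :
    ∑ a, ((A ⊗ₖ M) *ᵥ x) a ^ 2 ≤ (opNorm A * opNorm M) ^ 2 * ∑ a, x a ^ 2 := by
  have key : ∀ a : k × k', ((A ⊗ₖ M) *ᵥ x) a
      = (A *ᵥ fun j => (M *ᵥ fun l'' => x (j, l'')) a.2) a.1 := by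
    rintro ⟨i, c⟩
    simp only [Matrix.mulVec, dotProduct, Matrix.kroneckerMap_apply, Fintype.sum_prod_type]
    simp [Finset.mul_sum, mul_assoc]
  calc ∑ a : k × k', ((A ⊗ₖ M) *ᵥ x) a ^ 2
      = ∑ c : k', ∑ i : k, (A *ᵥ fun j => (M *ᵥ fun l'' => x (j, l'')) c) i ^ 2 := by
        rw [Fintype.sum_prod_type, Finset.sum_comm]
        simp [key]
    _ ≤ ∑ c : k', opNorm A ^ 2 * ∑ j, ((M *ᵥ fun l'' => x (j, l'')) c) ^ 2 := by
        exact Finset.sum_le_sum fun c _ => sq_mulVec_le A _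
    _ = opNorm A ^ 2 * ∑ j, ∑ c : k', ((M *ᵥ fun l'' => x (j, l'')) c) ^ 2 := by
        rw [← Finset.mul_sum, Finset.sum_comm]
    _ ≤ opNorm A ^ 2 * ∑ j, opNorm M ^ 2 * ∑ l'', x (j, l'') ^ 2 := by
        refine mul_le_mul_of_nonneg_left (Finset.sum_le_sum fun j _ => sq_mulVec_le M _) (by positivity)
    _ = (opNorm A * opNorm M) ^ 2 * ∑ a, x a ^ 2 := by
        rw [Fintype.sum_prod_type, ← Finset.mul_sum, mul_pow]
        ring

lemma vnorm_kron_mulVec_le {k l k' l' : Type*} [Fintype k] [Fintype l] [Fintype k'] [Fintype l']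
    [DecidableEq l] [DecidableEq l']
    (A : Matrix k l ℝ) (M : Matrix k' l' ℝ) (x : l × l' → ℝ) :
    vnorm ((A ⊗ₖ M) *ᵥ x) ≤ opNorm A * opNorm M * vnorm x := by
  rw [vnorm_eq_sqrt, vnorm_eq_sqrt]
  calc Real.sqrt (∑ a, ((A ⊗ₖ M) *ᵥ x) a ^ 2)
      ≤ Real.sqrt ((opNorm A * opNorm M) ^ 2 * ∑ a, x a ^ 2) :=
        Real.sqrt_le_sqrt (sq_kron_mulVec_le A M x)
    _ = opNorm A * opNorm M * Real.sqrt (∑ a, x a ^ 2) := by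
        have h1 : (0:ℝ) ≤ opNorm A * opNorm M :=
          mul_nonneg (opNorm_nonneg A) (opNorm_nonneg M)
        rw [Real.sqrt_mul (by positivity), Real.sqrt_sq h1]

lemma opNorm_one_le {ι : Type*} [Fintype ι] [DecidableEq ι] :
    opNorm (1 : Matrix ι ι ℝ) ≤ 1 := by
  apply ContinuousLinearMap.opNorm_le_bound _ zero_le_one
  intro x
  rw [LinearMap.coe_toContinuousLinearMap']
  rw [Matrix.toEuclideanLin_apply]
  simp


section Spec
variable {τ : Type*} [Fintype τ] [DecidableEq τ] {Q : Matrix τ τ ℝ}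

lemma dot_self_pos {x : τ → ℝ} (hx : x ≠ 0) : 0 < x ⬝ᵥ x := by
  have h0 : (0:ℝ) ≤ x ⬝ᵥ x := Finset.sum_nonneg fun i _ => mul_self_nonneg _
  rcases h0.lt_or_eq with h | h
  · exact h
  · exfalso
    apply hx
    funext i
    have := (Finset.sum_eq_zero_iff_of_nonneg (fun i _ => mul_self_nonneg (x i))).1 h.symm
    have h2 := this i (Finset.mem_univ i)
    have : x i = 0 := mul_self_eq_zero.mp h2
    simp [this]

lemma spectrum_pos_of_posDef (hQ : Q.PosDef) : ∀ μ ∈ spectrum ℝ Q, 0 < μ := by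
  intro μ hμ
  have hspec : μ ∈ spectrum ℝ (Matrix.toEuclideanLin Q) := by
    rwa [Matrix.spectrum_toEuclideanLin]
  have hev : Module.End.HasEigenvalue (Matrix.toEuclideanLin Q) μ :=
    Module.End.hasEigenvalue_iff_mem_spectrum.mpr hspec
  obtain ⟨v, hv⟩ := hev.exists_hasEigenvector
  have hvne : (v : τ → ℝ) ≠ 0 := fun h => hv.2 (by ext i; exact congrFun h i)
  have hApply : Q *ᵥ (v : τ → ℝ) = μ • (v : τ → ℝ) := by
    have := hv.apply_eq_smul
    rw [Matrix.toEuclideanLin_apply] at this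
    have h2 := congrArg (WithLp.equiv 2 (τ → ℝ)) this
    simpa using h2
  have hpos := hQ.dotProduct_mulVec_pos hvne
  rw [hApply] at hpos
  simp only [star_trivial, RCLike.re_to_real] at hpos
  rw [dotProduct_smul, smul_eq_mul] at hpos
  have hd : 0 < (v : τ → ℝ) ⬝ᵥ (v : τ → ℝ) := dot_self_pos hvne
  rcases mul_pos_iff.mp hpos with ⟨h1, _⟩ | ⟨_, h2⟩
  · exact h1
  · linarith

lemma eigMin_mem [Nonempty τ] (hQ : Q.IsHermitian) : eigMin Q ∈ spectrum ℝ Q := by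
  have hfin : (spectrum ℝ Q).Finite := Matrix.finite_spectrum Q
  have hne : (spectrum ℝ Q).Nonempty :=
    ⟨_, hQ.eigenvalues_mem_spectrum_real (Classical.arbitrary τ)⟩
  exact hne.csInf_mem hfin

lemma eigMin_pos [Nonempty τ] (hQ : Q.PosDef) : 0 < eigMin Q :=
  spectrum_pos_of_posDef hQ _ (eigMin_mem hQ.1)

lemma eigMin_le_eigenvalue (hQ : Q.IsHermitian) (i : τ) :
    eigMin Q ≤ hQ.eigenvalues i :=
  csInf_le (Matrix.finite_spectrum Q).bddBelow (hQ.eigenvalues_mem_spectrum_real i)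

lemma eigenvalue_le_eigMax (hQ : Q.IsHermitian) (i : τ) :
    hQ.eigenvalues i ≤ eigMax Q :=
  le_csSup (Matrix.finite_spectrum Q).bddAbove (hQ.eigenvalues_mem_spectrum_real i)

lemma quad_form_eq (hQ : Q.IsHermitian) (x : τ → ℝ) :
    x ⬝ᵥ (Q *ᵥ x) = ∑ i, hQ.eigenvalues i *
      (inner ℝ (hQ.eigenvectorBasis i) ((WithLp.equiv 2 (τ → ℝ)).symm x) : ℝ) ^ 2 := by
  classical
  set X := (WithLp.equiv 2 (τ → ℝ)).symm x with hX
  have hsymm : (Matrix.toEuclideanLin Q).IsSymmetric :=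
    (Matrix.isHermitian_iff_isSymmetric).1 hQ
  have hTb : ∀ i, Matrix.toEuclideanLin Q (hQ.eigenvectorBasis i)
      = hQ.eigenvalues i • hQ.eigenvectorBasis i := by
    intro i
    apply (WithLp.equiv 2 (τ → ℝ)).injective
    have := hQ.mulVec_eigenvectorBasis i
    simp only [Matrix.toEuclideanLin_apply]
    simpa using this
  have hinner : x ⬝ᵥ (Q *ᵥ x) = (inner ℝ X (Matrix.toEuclideanLin Q X) : ℝ) := by
    rw [PiLp.inner_apply, Matrix.toEuclideanLin_apply]
    simp [dotProduct, hX, RCLike.inner_apply, mul_comm]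
  rw [hinner, ← (hQ.eigenvectorBasis.sum_inner_mul_inner X (Matrix.toEuclideanLin Q X))]
  refine Finset.sum_congr rfl fun i _ => ?_
  rw [← hsymm (hQ.eigenvectorBasis i) X, hTb i, real_inner_smul_left, real_inner_comm]
  ring

lemma sum_sq_eq_inner (hQ : Q.IsHermitian) (x : τ → ℝ) :
    ∑ i, x i ^ 2 = ∑ i,
      (inner ℝ (hQ.eigenvectorBasis i) ((WithLp.equiv 2 (τ → ℝ)).symm x) : ℝ) ^ 2 := by
  set X := (WithLp.equiv 2 (τ → ℝ)).symm x with hX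
  have h1 : (inner ℝ X X : ℝ) = ∑ i, x i ^ 2 := by
    rw [PiLp.inner_apply]
    simp [hX, RCLike.inner_apply, sq]
  rw [← h1, ← (hQ.eigenvectorBasis.sum_inner_mul_inner X X)]
  refine Finset.sum_congr rfl fun i _ => ?_
  rw [real_inner_comm X]
  ring

lemma quad_form_le (hQ : Q.IsHermitian) (x : τ → ℝ) :
    x ⬝ᵥ (Q *ᵥ x) ≤ eigMax Q * ∑ i, x i ^ 2 := by
  rw [quad_form_eq hQ x, sum_sq_eq_inner hQ x, Finset.mul_sum]
  exact Finset.sum_le_sum fun i _ =>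
    mul_le_mul_of_nonneg_right (eigenvalue_le_eigMax hQ i) (sq_nonneg _)

lemma le_quad_form (hQ : Q.IsHermitian) (x : τ → ℝ) :
    eigMin Q * ∑ i, x i ^ 2 ≤ x ⬝ᵥ (Q *ᵥ x) := by
  rw [quad_form_eq hQ x, sum_sq_eq_inner hQ x, Finset.mul_sum]
  exact Finset.sum_le_sum fun i _ =>
    mul_le_mul_of_nonneg_right (eigMin_le_eigenvalue hQ i) (sq_nonneg _)

end Spec


lemma decay_lemma {V Vd : ℝ → ℝ} {T a b : ℝ} (ha : 0 < a) (hb : 0 ≤ b)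
    (hV : ∀ t, T ≤ t → HasDerivAt V (Vd t) t)
    (hVd : ∀ t, T ≤ t → Vd t ≤ -a * V t + b) :
    ∀ ε > 0, ∀ᶠ t in atTop, V t ≤ b / a + ε := by
  intro ε hε
  set c : ℝ := b + a * ε / 2 with hc
  set Bd : ℝ → ℝ := fun x => V T * Real.exp (-a * (x - T)) + c / a with hBd
  set Bd' : ℝ → ℝ := fun x => V T * (Real.exp (-a * (x - T)) * -a) with hBd'
  have hBderiv : ∀ x, HasDerivAt Bd (Bd' x) x := by
    intro x
    have h1 : HasDerivAt (fun x : ℝ => -a * (x - T)) (-a) x := by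
      simpa using (((hasDerivAt_id x).sub_const T).const_mul (-a))
    have h2 : HasDerivAt (fun x : ℝ => Real.exp (-a * (x - T)))
        (Real.exp (-a * (x - T)) * -a) x := (Real.hasDerivAt_exp _).comp x h1
    simpa [hBd, hBd', mul_assoc] using (h2.const_mul (V T)).add_const (c / a)
  have key : ∀ x, T ≤ x → V x ≤ Bd x := by
    intro y hy
    have := image_le_of_deriv_right_lt_deriv_boundary
      (f := V) (f' := Vd) (a := T) (b := y) (B := Bd) (B' := Bd')
      (fun t ht => (hV t ht.1).continuousAt.continuousWithinAt)
      (fun t ht => (hV t ht.1).hasDerivWithinAt)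
      (by
        have hca : 0 ≤ c / a := by positivity
        simp only [hBd, sub_self, mul_zero, neg_mul, neg_zero, Real.exp_zero, mul_one]
        linarith)
      hBderiv
      (by
        intro x hx hVB
        have h1 := hVd x hx.1
        have : Bd' x = -a * Bd x + c := by
          simp only [hBd, hBd']
          field_simp
          ring
        rw [this, ← hVB]
        have : 0 < a * ε / 2 := by positivity
        simp only [hc]
        linarith)
    exact this ⟨hy, le_rfl⟩
  have htend : Tendsto (fun x : ℝ => V T * Real.exp (-a * (x - T))) atTop (nhds 0) := by
    have h1 : Tendsto (fun x : ℝ => a * (x - T)) atTop atTop :=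
      (tendsto_atTop_add_const_right atTop (-T) tendsto_id).const_mul_atTop ha
    have h2 : Tendsto (fun x : ℝ => -a * (x - T)) atTop atBot := by
      have h := tendsto_neg_atTop_atBot.comp h1
      exact h.congr fun x => by simp [Function.comp, neg_mul]
    have h3 := Real.tendsto_exp_atBot.comp h2
    simpa using h3.const_mul (V T)
  have hev1 : ∀ᶠ x in atTop, V T * Real.exp (-a * (x - T)) ≤ ε / 2 := by
    have := htend.eventually (eventually_le_nhds (by positivity : (0:ℝ) < ε / 2))
    exact this
  have hev2 : ∀ᶠ x in atTop, T ≤ x := eventually_ge_atTop T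
  filter_upwards [hev1, hev2] with x h1 h2
  have h3 := key x h2
  have : c / a = b / a + ε / 2 := by field_simp; ring
  simp only [hBd] at h3
  rw [this] at h3
  linarith


lemma coord_hasDerivAt {ι : Type*} [Fintype ι] {f : ℝ → EuclideanSpace ℝ ι}
    {d : EuclideanSpace ℝ ι} {t : ℝ} (h : HasDerivAt f d t) (i : ι) :
    HasDerivAt (fun s => f s i) (d i) t := by
  let ℓ : EuclideanSpace ℝ ι →L[ℝ] ℝ :=
    (ContinuousLinearMap.proj i).comp
      (PiLp.continuousLinearEquiv 2 ℝ (fun _ : ι => ℝ)).toContinuousLinearMap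
  exact ℓ.hasFDerivAt.comp_hasDerivAt t h

lemma toEuclideanLin_coord {k l : Type*} [Fintype k] [Fintype l] [DecidableEq l]
    (M : Matrix k l ℝ) (v : EuclideanSpace ℝ l) (i : k) :
    Matrix.toEuclideanLin M v i = ∑ j, M i j * v j := by
  rw [Matrix.toEuclideanLin_apply]
  rfl

lemma mulVec_dot {α β : Type*} [Fintype α] [Fintype β]
    (A : Matrix α β ℝ) (x : β → ℝ) (y : α → ℝ) :
    (A *ᵥ x) ⬝ᵥ y = x ⬝ᵥ (Aᵀ *ᵥ y) := by
  rw [Matrix.dotProduct_mulVec, Matrix.vecMul_transpose, dotProduct_comm]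

lemma sqrt_add_le' {x y : ℝ} (hx : 0 ≤ x) (hy : 0 ≤ y) :
    Real.sqrt (x + y) ≤ Real.sqrt x + Real.sqrt y := by
  rw [← Real.sqrt_sq (by positivity : (0:ℝ) ≤ Real.sqrt x + Real.sqrt y)]
  apply Real.sqrt_le_sqrt
  nlinarith [Real.sq_sqrt hx, Real.sq_sqrt hy, Real.sqrt_nonneg x, Real.sqrt_nonneg y]

lemma piLp_wsum_apply {ι κ : Type*} [Fintype ι] (c : ι → ℝ)
    (f g : ι → EuclideanSpace ℝ κ) (l : κ) :
    (∑ j, c j • (f j - g j)) l = ∑ j, c j * (f j l - g j l) := by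
  induction (Finset.univ : Finset ι) using Finset.cons_induction with
  | empty => rfl
  | cons a s ha ih => rw [Finset.sum_cons, Finset.sum_cons, ← ih]; rfl

lemma kron_mulVec_apply {α β γ δ : Type*} [Fintype β] [Fintype δ]
    (P : Matrix α β ℝ) (R : Matrix γ δ ℝ) (x : β × δ → ℝ) (a : α × γ) :
    ((P ⊗ₖ R) *ᵥ x) a = ∑ l, R a.2 l * (P *ᵥ fun j => x (j, l)) a.1 := by
  simp only [Matrix.mulVec, dotProduct, Matrix.kroneckerMap_apply, Fintype.sum_prod_type]
  rw [Finset.sum_comm]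
  refine Finset.sum_congr rfl fun l _ => ?_
  rw [Finset.mul_sum]
  exact Finset.sum_congr rfl fun j _ => by ring

/-- **Lemma 2** (perturbed consensus): for the agents `σ_i' = Sσ_i + Bχ_i` with controller
`χ_i = −M Σ_j a_{ij}(σ_i − σ_j) + Mφ_i`, if the graph has a spanning tree and
`A_ζ = I_{n−1} ⊗ S − H ⊗ BM` is Hurwitz, then `limsup‖χ‖ ≤ γ_χ · limsup‖φ‖` for any bounded
`φ`, where `γ_χ = ‖M‖(‖LU‖γ_ζ + 1)` and `γ_ζ = √(ϖ(Q))‖Q(W ⊗ BM)‖`, with `Q = Qᵀ > 0` the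
solution of `QA_ζ + A_ζᵀQ = −2I`. -/
theorem stmt1 (n p m : ℕ)
    (S : Matrix (Fin p) (Fin p) ℝ) (B : Matrix (Fin p) (Fin m) ℝ)
    (M : Matrix (Fin m) (Fin p) ℝ)
    -- the weighted digraph: adjacency matrix, Laplacian, and spanning tree assumption
    (A : Matrix (Fin n) (Fin n) ℝ) (hA : ∀ i j, 0 ≤ A i j)
    (hspan : HasSpanningTree A)
    (L : Matrix (Fin n) (Fin n) ℝ)
    (hLdiag : ∀ i, L i i = ∑ j, A i j) (hLoff : ∀ i j, i ≠ j → L i j = -A i j)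
    -- `r` and `1` are left/right eigenvectors of `L` for the eigenvalue `0` with `rᵀ1 = 1`
    (r onev : Fin n → ℝ) (hone : onev = fun _ => 1)
    (hrL : Matrix.vecMul r L = 0) (hL1 : L *ᵥ onev = 0) (hr1 : r ⬝ᵥ onev = 1)
    -- `W`, `U`: `T = [rᵀ; W]` is invertible with `T⁻¹ = [1 U]`; `H = WLU`
    (W : Matrix (Fin (n - 1)) (Fin n) ℝ) (U : Matrix (Fin n) (Fin (n - 1)) ℝ)
    (hW1 : W *ᵥ onev = 0) (hrU : Matrix.vecMul r U = 0)
    (hWU : W * U = 1) (hTinv : Matrix.vecMulVec onev r + U * W = 1)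
    -- `M` is selected such that `A_ζ = I_{n−1} ⊗ S − H ⊗ BM` is Hurwitz
    (hHur : IsHurwitz ((1 : Matrix (Fin (n - 1)) (Fin (n - 1)) ℝ) ⊗ₖ S
      - (W * L * U) ⊗ₖ (B * M)))
    -- `Q = Qᵀ > 0` solves the Lyapunov equation `QA_ζ + A_ζᵀQ = −2I`
    (Q : Matrix ((Fin (n - 1)) × Fin p) ((Fin (n - 1)) × Fin p) ℝ)
    (hQsymm : Q.IsSymm) (hQpos : Q.PosDef)
    (hQlyap : Q * ((1 : Matrix (Fin (n - 1)) (Fin (n - 1)) ℝ) ⊗ₖ S - (W * L * U) ⊗ₖ (B * M))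
      + ((1 : Matrix (Fin (n - 1)) (Fin (n - 1)) ℝ) ⊗ₖ S - (W * L * U) ⊗ₖ (B * M))ᵀ * Q
      = -((2 : ℝ) • (1 : Matrix ((Fin (n - 1)) × Fin p) ((Fin (n - 1)) × Fin p) ℝ)))
    -- trajectories: external perturbation `φ` (bounded), controller `χ`, agents `σ`
    (φ : Fin n → ℝ → EuclideanSpace ℝ (Fin p))
    (hφb : ∃ c : ℝ, ∀ i t, 0 ≤ t → ‖φ i t‖ ≤ c)
    (σ : Fin n → ℝ → EuclideanSpace ℝ (Fin p))
    (χ : Fin n → ℝ → EuclideanSpace ℝ (Fin m))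
    (hχ : ∀ i t, χ i t
      = -(Matrix.toEuclideanLin M (∑ j, A i j • (σ i t - σ j t)))
        + Matrix.toEuclideanLin M (φ i t))
    (hσ : ∀ i t, 0 ≤ t → HasDerivAt (σ i)
      (Matrix.toEuclideanLin S (σ i t) + Matrix.toEuclideanLin B (χ i t)) t) :
    limsup (fun t => Real.sqrt (∑ i, ‖χ i t‖ ^ 2)) atTop ≤
      opNorm M * (opNorm (L * U) *
          (Real.sqrt (varpi Q) * opNorm (Q * (W ⊗ₖ (B * M)))) + 1) *
        limsup (fun t => Real.sqrt (∑ i, ‖φ i t‖ ^ 2)) atTop := by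
  classical
  have hn : n ≠ 0 := by rintro rfl; simp [dotProduct] at hr1
  -- abbreviations
  set Gm : Matrix (Fin (n-1) × Fin p) (Fin n × Fin p) ℝ := W ⊗ₖ (B * M) with hGm
  set Az : Matrix (Fin (n-1) × Fin p) (Fin (n-1) × Fin p) ℝ :=
    (1 : Matrix (Fin (n - 1)) (Fin (n - 1)) ℝ) ⊗ₖ S - (W * L * U) ⊗ₖ (B * M) with hAz
  set z : ℝ → (Fin (n-1) × Fin p) → ℝ :=
    fun t => (W ⊗ₖ (1 : Matrix (Fin p) (Fin p) ℝ)) *ᵥ (fun a => σ a.1 t a.2) with hz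
  -- row sums of L vanish and A has zero diagonal
  have hrow : ∀ i, ∑ j, L i j = 0 := by
    intro i
    have h := congrFun hL1 i
    simpa [Matrix.mulVec, dotProduct, hone] using h
  have haii : ∀ i, A i i = 0 := by
    intro i
    have h2 : ∑ j ∈ Finset.univ.erase i, L i j = -∑ j ∈ Finset.univ.erase i, A i j := by
      rw [← Finset.sum_neg_distrib]
      exact Finset.sum_congr rfl fun j hj => hLoff i j (Ne.symm (Finset.ne_of_mem_erase hj))
    have h1 : ∑ j, L i j = A i i := by
      rw [← Finset.add_sum_erase _ _ (Finset.mem_univ i), hLdiag i, h2,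
        ← Finset.add_sum_erase _ (fun j => A i j) (Finset.mem_univ i)]
      ring
    rw [hrow i] at h1
    exact h1.symm
  -- the Laplacian identity
  have hLact : ∀ (x : Fin n → ℝ) i, ∑ j, A i j * (x i - x j) = (L *ᵥ x) i := by
    intro x i
    have e1 : ∑ j, A i j * (x i - x j) = (∑ j, A i j) * x i - ∑ j, A i j * x j := by
      rw [Finset.sum_mul, ← Finset.sum_sub_distrib]
      exact Finset.sum_congr rfl fun j _ => by ring
    have e2 : ∑ j, A i j * x j = ∑ j ∈ Finset.univ.erase i, A i j * x j := by
      rw [← Finset.add_sum_erase _ (fun j => A i j * x j) (Finset.mem_univ i), haii i,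
        zero_mul, zero_add]
    have e3 : (L *ᵥ x) i = L i i * x i + ∑ j ∈ Finset.univ.erase i, L i j * x j := by
      simp only [Matrix.mulVec, dotProduct]
      rw [← Finset.add_sum_erase _ (fun j => L i j * x j) (Finset.mem_univ i)]
    have e4 : ∑ j ∈ Finset.univ.erase i, L i j * x j
        = -∑ j ∈ Finset.univ.erase i, A i j * x j := by
      rw [← Finset.sum_neg_distrib]
      refine Finset.sum_congr rfl fun j hj => ?_
      rw [hLoff i j (Ne.symm (Finset.ne_of_mem_erase hj))]; ring
    rw [e1, e2, e3, e4, hLdiag i]; ring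
  -- the controller, in stacked vector form
  have hXχv : ∀ t, (fun a : Fin n × Fin m => χ a.1 t a.2) = -((L ⊗ₖ M) *ᵥ (fun a => σ a.1 t a.2))
      + ((1 : Matrix (Fin n) (Fin n) ℝ) ⊗ₖ M) *ᵥ (fun a => φ a.1 t a.2) := by
    intro t
    funext a
    obtain ⟨i, k⟩ := a
    have h : χ i t k = (-(Matrix.toEuclideanLin M (∑ j, A i j • (σ i t - σ j t)))
        + Matrix.toEuclideanLin M (φ i t)) k := by rw [hχ i t]
    have hneg : ∀ (u v : EuclideanSpace ℝ (Fin m)) (k' : Fin m), (-u + v) k' = -(u k') + v k' :=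
      fun _ _ _ => rfl
    rw [hneg, toEuclideanLin_coord, toEuclideanLin_coord] at h
    have h2 : ∀ l, (∑ j, A i j • (σ i t - σ j t)) l = (L *ᵥ fun j' => σ j' t l) i := by
      intro l
      rw [piLp_wsum_apply]
      exact hLact (fun j' => σ j' t l) i
    simp only [h2] at h
    show χ i t k = _
    rw [h]
    simp only [Pi.add_apply, Pi.neg_apply]
    rw [kron_mulVec_apply L M _ (i, k), kron_mulVec_apply _ M _ (i, k)]
    simp [Matrix.one_mulVec]
  -- matrix identities from the coordinate transformation
  have hLvec : L * Matrix.vecMulVec onev r = 0 := by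
    ext i j
    simp only [Matrix.mul_apply, Matrix.vecMulVec_apply, hone, one_mul, Matrix.zero_apply]
    rw [← Finset.sum_mul, hrow i, zero_mul]
  have hWL : W * L = (W * L * U) * W := by
    calc W * L = W * L * (Matrix.vecMulVec onev r + U * W) := by rw [hTinv, Matrix.mul_one]
    _ = W * (L * Matrix.vecMulVec onev r) + W * L * U * W := by
        rw [Matrix.mul_add, Matrix.mul_assoc W L (Matrix.vecMulVec onev r), ← Matrix.mul_assoc (W * L) U W]
    _ = (W * L * U) * W := by rw [hLvec, Matrix.mul_zero, zero_add]
  have hLW : L = (L * U) * W := by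
    calc L = L * (Matrix.vecMulVec onev r + U * W) := by rw [hTinv, Matrix.mul_one]
    _ = L * Matrix.vecMulVec onev r + (L * U) * W := by rw [Matrix.mul_add, ← Matrix.mul_assoc]
    _ = (L * U) * W := by rw [hLvec, zero_add]
  -- controller in terms of z
  have hXχz : ∀ t, (fun a : Fin n × Fin m => χ a.1 t a.2)
      = -(((L * U) ⊗ₖ M) *ᵥ z t)
        + ((1 : Matrix (Fin n) (Fin n) ℝ) ⊗ₖ M) *ᵥ (fun a => φ a.1 t a.2) := by
    intro t
    rw [hXχv t, hz]
    congr 2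
    rw [Matrix.mulVec_mulVec, ← Matrix.mul_kronecker_mul, Matrix.mul_one, ← hLW]
  -- coordinate derivatives of the stacked state
  have hXderiv : ∀ (a : Fin n × Fin p) (t : ℝ), 0 ≤ t → HasDerivAt (fun s => σ a.1 s a.2)
      ((Matrix.toEuclideanLin S (σ a.1 t) + Matrix.toEuclideanLin B (χ a.1 t)) a.2) t :=
    fun a t ht => coord_hasDerivAt (hσ a.1 t ht) a.2
  have hXdm : ∀ t, (fun a : Fin n × Fin p =>
        (Matrix.toEuclideanLin S (σ a.1 t) + Matrix.toEuclideanLin B (χ a.1 t)) a.2)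
      = ((1 : Matrix (Fin n) (Fin n) ℝ) ⊗ₖ S) *ᵥ (fun a => σ a.1 t a.2)
        + ((1 : Matrix (Fin n) (Fin n) ℝ) ⊗ₖ B) *ᵥ (fun a => χ a.1 t a.2) := by
    intro t
    funext a
    obtain ⟨i, k⟩ := a
    have hadd : ∀ (u v : EuclideanSpace ℝ (Fin p)) (k' : Fin p), (u + v) k' = u k' + v k' :=
      fun _ _ _ => rfl
    show (Matrix.toEuclideanLin S (σ i t) + Matrix.toEuclideanLin B (χ i t)) k = _
    rw [hadd, toEuclideanLin_coord, toEuclideanLin_coord]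
    simp only [Pi.add_apply]
    rw [kron_mulVec_apply _ S _ (i, k), kron_mulVec_apply _ B _ (i, k)]
    simp [Matrix.one_mulVec]
  -- the closed-loop identity for the derivative of z
  have hzd_eq : ∀ t, (W ⊗ₖ (1 : Matrix (Fin p) (Fin p) ℝ)) *ᵥ (fun a : Fin n × Fin p =>
        (Matrix.toEuclideanLin S (σ a.1 t) + Matrix.toEuclideanLin B (χ a.1 t)) a.2)
      = Az *ᵥ z t + Gm *ᵥ (fun a => φ a.1 t a.2) := by
    intro t
    set P : Matrix (Fin (n-1) × Fin p) (Fin n × Fin p) ℝ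
      := W ⊗ₖ (1 : Matrix (Fin p) (Fin p) ℝ) with hP
    set x : (Fin n × Fin p) → ℝ := fun a => σ a.1 t a.2 with hx
    set y : (Fin n × Fin p) → ℝ := fun a => φ a.1 t a.2 with hy
    rw [hXdm t, hXχz t]
    have c1 : P * ((1 : Matrix (Fin n) (Fin n) ℝ) ⊗ₖ S)
        = ((1 : Matrix (Fin (n-1)) (Fin (n-1)) ℝ) ⊗ₖ S) * P := by
      rw [hP, ← Matrix.mul_kronecker_mul, ← Matrix.mul_kronecker_mul, Matrix.mul_one,
        Matrix.one_mul, Matrix.mul_one, Matrix.one_mul]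
    have c2 : P * ((1 : Matrix (Fin n) (Fin n) ℝ) ⊗ₖ B) = W ⊗ₖ B := by
      rw [hP, ← Matrix.mul_kronecker_mul, Matrix.mul_one, Matrix.one_mul]
    have c3 : (W ⊗ₖ B) * (((L * U) ⊗ₖ M)) = (W * L * U) ⊗ₖ (B * M) := by
      rw [← Matrix.mul_kronecker_mul, ← Matrix.mul_assoc]
    have c4 : (W ⊗ₖ B) * ((1 : Matrix (Fin n) (Fin n) ℝ) ⊗ₖ M) = Gm := by
      rw [hGm, ← Matrix.mul_kronecker_mul, Matrix.mul_one]
    have t1 : P *ᵥ (((1 : Matrix (Fin n) (Fin n) ℝ) ⊗ₖ S) *ᵥ x)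
        = ((1 : Matrix (Fin (n-1)) (Fin (n-1)) ℝ) ⊗ₖ S) *ᵥ (P *ᵥ x) := by
      rw [Matrix.mulVec_mulVec, c1, ← Matrix.mulVec_mulVec]
    have t2 : P *ᵥ (((1 : Matrix (Fin n) (Fin n) ℝ) ⊗ₖ B) *ᵥ
          (-(((L * U) ⊗ₖ M) *ᵥ (P *ᵥ x))))
        = -(((W * L * U) ⊗ₖ (B * M)) *ᵥ (P *ᵥ x)) := by
      rw [Matrix.mulVec_neg, Matrix.mulVec_neg]
      rw [Matrix.mulVec_mulVec, Matrix.mulVec_mulVec, c2, c3]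
    have t3 : P *ᵥ (((1 : Matrix (Fin n) (Fin n) ℝ) ⊗ₖ B) *ᵥ
          (((1 : Matrix (Fin n) (Fin n) ℝ) ⊗ₖ M) *ᵥ y)) = Gm *ᵥ y := by
      rw [Matrix.mulVec_mulVec, Matrix.mulVec_mulVec, c2, c4]
    calc P *ᵥ (((1 : Matrix (Fin n) (Fin n) ℝ) ⊗ₖ S) *ᵥ x
          + ((1 : Matrix (Fin n) (Fin n) ℝ) ⊗ₖ B) *ᵥ
            (-(((L * U) ⊗ₖ M) *ᵥ (P *ᵥ x))
              + ((1 : Matrix (Fin n) (Fin n) ℝ) ⊗ₖ M) *ᵥ y))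
        = P *ᵥ (((1 : Matrix (Fin n) (Fin n) ℝ) ⊗ₖ S) *ᵥ x)
          + (P *ᵥ (((1 : Matrix (Fin n) (Fin n) ℝ) ⊗ₖ B) *ᵥ
              (-(((L * U) ⊗ₖ M) *ᵥ (P *ᵥ x))))
            + P *ᵥ (((1 : Matrix (Fin n) (Fin n) ℝ) ⊗ₖ B) *ᵥ
              (((1 : Matrix (Fin n) (Fin n) ℝ) ⊗ₖ M) *ᵥ y))) := by
          rw [Matrix.mulVec_add, Matrix.mulVec_add, Matrix.mulVec_add]
      _ = Az *ᵥ (P *ᵥ x) + Gm *ᵥ y := by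
          rw [t1, t2, t3, hAz, Matrix.sub_mulVec]
          abel
  -- derivative of the coordinates of z
  have hzderiv : ∀ (c : Fin (n-1) × Fin p) (t : ℝ), 0 ≤ t →
      HasDerivAt (fun s => z s c) ((Az *ᵥ z t + Gm *ᵥ (fun a => φ a.1 t a.2)) c) t := by
    intro c t ht
    have h1 : HasDerivAt
        (fun s => ∑ b : Fin n × Fin p,
          (W ⊗ₖ (1 : Matrix (Fin p) (Fin p) ℝ)) c b * σ b.1 s b.2)
        (∑ b : Fin n × Fin p, (W ⊗ₖ (1 : Matrix (Fin p) (Fin p) ℝ)) c b *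
          ((Matrix.toEuclideanLin S (σ b.1 t) + Matrix.toEuclideanLin B (χ b.1 t)) b.2)) t :=
      HasDerivAt.fun_sum fun b _ => (hXderiv b t ht).const_mul _
    have h2 : (fun s => z s c) = fun s => ∑ b : Fin n × Fin p,
        (W ⊗ₖ (1 : Matrix (Fin p) (Fin p) ℝ)) c b * σ b.1 s b.2 := by
      funext s
      simp [hz, Matrix.mulVec, dotProduct]
    have h3 : (Az *ᵥ z t + Gm *ᵥ (fun a => φ a.1 t a.2)) c
        = ∑ b : Fin n × Fin p, (W ⊗ₖ (1 : Matrix (Fin p) (Fin p) ℝ)) c b *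
          ((Matrix.toEuclideanLin S (σ b.1 t) + Matrix.toEuclideanLin B (χ b.1 t)) b.2) := by
      rw [← hzd_eq t]
      simp [Matrix.mulVec, dotProduct]
    rw [h2, h3]
    exact h1
  -- the Lyapunov function
  set Vf : ℝ → ℝ := fun t => z t ⬝ᵥ (Q *ᵥ z t) with hVf
  set zd : ℝ → (Fin (n-1) × Fin p) → ℝ :=
    fun t => Az *ᵥ z t + Gm *ᵥ (fun a => φ a.1 t a.2) with hzd
  set Vd : ℝ → ℝ := fun t => zd t ⬝ᵥ (Q *ᵥ z t) + z t ⬝ᵥ (Q *ᵥ zd t) with hVd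
  have hVderiv : ∀ t, 0 ≤ t → HasDerivAt Vf (Vd t) t := by
    intro t ht
    have h1 : ∀ c, HasDerivAt (fun s => z s c) (zd t c) t := fun c => hzderiv c t ht
    have h2 : HasDerivAt (fun s => ∑ c, z s c * ∑ b, Q c b * z s b)
        (∑ c, (zd t c * ∑ b, Q c b * z t b + z t c * ∑ b, Q c b * zd t b)) t :=
      HasDerivAt.fun_sum fun c _ => (h1 c).mul (HasDerivAt.fun_sum fun b _ => (h1 b).const_mul _)
    have h3 : Vf = fun s => ∑ c, z s c * ∑ b, Q c b * z s b := by
      funext s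
      simp [hVf, dotProduct, Matrix.mulVec]
    have h4 : Vd t = ∑ c, (zd t c * ∑ b, Q c b * z t b + z t c * ∑ b, Q c b * zd t b) := by
      rw [hVd]
      simp only [dotProduct, Matrix.mulVec]
      rw [← Finset.sum_add_distrib]
    rw [h3, h4]
    exact h2
  -- the Lyapunov algebra
  have hVd_eq : ∀ t, Vd t = -2 * (z t ⬝ᵥ z t)
      + 2 * (z t ⬝ᵥ ((Q * Gm) *ᵥ (fun a => φ a.1 t a.2))) := by
    intro t
    rw [hVd, hzd]
    set u := z t with hu
    set v := (fun a : Fin n × Fin p => φ a.1 t a.2) with hv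
    have t1 : (Az *ᵥ u) ⬝ᵥ (Q *ᵥ u) = u ⬝ᵥ ((Azᵀ * Q) *ᵥ u) := by
      rw [mulVec_dot, Matrix.mulVec_mulVec]
    have t3 : u ⬝ᵥ (Q *ᵥ (Az *ᵥ u)) = u ⬝ᵥ ((Q * Az) *ᵥ u) := by rw [Matrix.mulVec_mulVec]
    have t2 : (Gm *ᵥ v) ⬝ᵥ (Q *ᵥ u) = u ⬝ᵥ ((Q * Gm) *ᵥ v) := by
      rw [dotProduct_comm, mulVec_dot Q u (Gm *ᵥ v), hQsymm, Matrix.mulVec_mulVec]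
    have t4 : u ⬝ᵥ (Q *ᵥ (Gm *ᵥ v)) = u ⬝ᵥ ((Q * Gm) *ᵥ v) := by rw [Matrix.mulVec_mulVec]
    have lyap : Azᵀ * Q + Q * Az = -((2:ℝ) • (1 : Matrix ((Fin (n - 1)) × Fin p) ((Fin (n - 1)) × Fin p) ℝ)) := by
      rw [add_comm]; exact hQlyap
    have t13 : (Az *ᵥ u) ⬝ᵥ (Q *ᵥ u) + u ⬝ᵥ (Q *ᵥ (Az *ᵥ u)) = -2 * (u ⬝ᵥ u) := by
      rw [t1, t3, ← dotProduct_add, ← Matrix.add_mulVec, lyap, Matrix.neg_mulVec,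
        Matrix.smul_mulVec, Matrix.one_mulVec, dotProduct_neg,
        dotProduct_smul]
      simp [smul_eq_mul]
      try ring
    calc (Az *ᵥ u + Gm *ᵥ v) ⬝ᵥ (Q *ᵥ u) + u ⬝ᵥ (Q *ᵥ (Az *ᵥ u + Gm *ᵥ v))
        = ((Az *ᵥ u) ⬝ᵥ (Q *ᵥ u) + u ⬝ᵥ (Q *ᵥ (Az *ᵥ u)))
          + ((Gm *ᵥ v) ⬝ᵥ (Q *ᵥ u) + u ⬝ᵥ (Q *ᵥ (Gm *ᵥ v))) := by
          rw [add_dotProduct, Matrix.mulVec_add, dotProduct_add]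
          ring
      _ = -2 * (u ⬝ᵥ u) + 2 * (u ⬝ᵥ ((Q * Gm) *ᵥ v)) := by rw [t13, t2, t4]; ring
  -- quadratic form bounds
  have hquadU : ∀ t, Vf t ≤ eigMax Q * vnorm (z t) ^ 2 := fun t => by
    rw [sq_vnorm]; exact quad_form_le hQpos.1 (z t)
  have hquadL : ∀ t, eigMin Q * vnorm (z t) ^ 2 ≤ Vf t := fun t => by
    rw [sq_vnorm]; exact le_quad_form hQpos.1 (z t)
  -- KEY estimate: ultimate bound for z
  have hKEY : ∀ s : ℝ, 0 ≤ s →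
      (∀ᶠ t in atTop, vnorm (fun a : Fin n × Fin p => φ a.1 t a.2) ≤ s) →
      ∀ ε : ℝ, 0 < ε → ∀ᶠ t in atTop,
        vnorm (z t) ≤ Real.sqrt (varpi Q) * opNorm (Q * Gm) * s + ε := by
    intro s hs0 hs ε hε
    rcases isEmpty_or_nonempty (Fin (n-1) × Fin p) with hemp | hne
    · have hz0 : ∀ t, vnorm (z t) = 0 := fun t => by
        rw [vnorm_eq_sqrt]
        simp
      have hγ : 0 ≤ Real.sqrt (varpi Q) * opNorm (Q * Gm) * s :=
        mul_nonneg (mul_nonneg (Real.sqrt_nonneg _) (opNorm_nonneg _)) hs0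
      filter_upwards with t
      rw [hz0 t]
      linarith
    · have hlmin : 0 < eigMin Q := eigMin_pos hQpos
      have hlmax : 0 < eigMax Q := by
        have h1 := eigMin_le_eigenvalue hQpos.1 (Classical.arbitrary _)
        have h2 := eigenvalue_le_eigMax hQpos.1 (Classical.arbitrary _)
        linarith
      obtain ⟨T0, hT0⟩ := eventually_atTop.mp hs
      have hTs : ∀ t, max T0 0 ≤ t → vnorm (fun a : Fin n × Fin p => φ a.1 t a.2) ≤ s :=
        fun t ht => hT0 t (le_trans (le_max_left _ _) ht)
      have hTnn : ∀ t, max T0 0 ≤ t → (0:ℝ) ≤ t := fun t ht => le_trans (le_max_right _ _) ht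
      have hVub : ∀ t, max T0 0 ≤ t →
          Vd t ≤ -(1 / eigMax Q) * Vf t + (opNorm (Q * Gm) * s)^2 := by
        intro t ht
        rw [hVd_eq t]
        have c1 : z t ⬝ᵥ ((Q * Gm) *ᵥ (fun a : Fin n × Fin p => φ a.1 t a.2))
            ≤ vnorm (z t) * (opNorm (Q * Gm) * s) := by
          calc z t ⬝ᵥ ((Q * Gm) *ᵥ (fun a : Fin n × Fin p => φ a.1 t a.2))
              ≤ vnorm (z t) * vnorm ((Q * Gm) *ᵥ (fun a : Fin n × Fin p => φ a.1 t a.2)) :=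
                dotProduct_le_vnorm _ _
            _ ≤ vnorm (z t) * (opNorm (Q * Gm) *
                  vnorm (fun a : Fin n × Fin p => φ a.1 t a.2)) :=
                mul_le_mul_of_nonneg_left (vnorm_mulVec_le _ _) (vnorm_nonneg _)
            _ ≤ vnorm (z t) * (opNorm (Q * Gm) * s) :=
                mul_le_mul_of_nonneg_left
                  (mul_le_mul_of_nonneg_left (hTs t ht) (opNorm_nonneg _)) (vnorm_nonneg _)
        have c2 : z t ⬝ᵥ z t = vnorm (z t) ^ 2 := by
          rw [sq_vnorm]
          simp [dotProduct, sq]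
        have c3 := hquadU t
        have c4 := vnorm_nonneg (z t)
        have c6 : -(vnorm (z t)^2) ≤ -(1 / eigMax Q) * Vf t := by
          have h5 := mul_le_mul_of_nonneg_left c3 (le_of_lt (one_div_pos.mpr hlmax))
          have h7 : (1 / eigMax Q) * (eigMax Q * vnorm (z t)^2) = vnorm (z t)^2 := by
            field_simp
          linarith
        have c5 : -2 * (z t ⬝ᵥ z t)
            + 2 * (z t ⬝ᵥ ((Q * Gm) *ᵥ (fun a : Fin n × Fin p => φ a.1 t a.2)))
            ≤ -(vnorm (z t)^2) + (opNorm (Q * Gm) * s)^2 := by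
          rw [c2]
          nlinarith [c1, sq_nonneg (vnorm (z t) - opNorm (Q * Gm) * s)]
        linarith
      have hdecay := decay_lemma (T := max T0 0) (a := 1 / eigMax Q)
        (b := (opNorm (Q * Gm) * s)^2) (one_div_pos.mpr hlmax) (by positivity)
        (fun t ht => hVderiv t (hTnn t ht)) hVub
      have hev := hdecay (eigMin Q * ε^2) (mul_pos hlmin (by positivity))
      filter_upwards [hev] with t hVt
      have h8 : vnorm (z t) ≤ Real.sqrt (Vf t / eigMin Q) := by
        rw [← Real.sqrt_sq (vnorm_nonneg (z t))]
        apply Real.sqrt_le_sqrt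
        rw [le_div_iff₀ hlmin]
        have := hquadL t
        linarith [mul_comm (eigMin Q) (vnorm (z t)^2)]
      have h9 : Vf t / eigMin Q
          ≤ (eigMax Q * (opNorm (Q * Gm) * s)^2 + eigMin Q * ε^2) / eigMin Q := by
        refine (div_le_div_iff_of_pos_right hlmin).mpr ?_
        have he : (opNorm (Q * Gm) * s)^2 / (1 / eigMax Q)
            = eigMax Q * (opNorm (Q * Gm) * s)^2 := by
          rw [div_div_eq_mul_div, div_one]
          ring
        rw [he] at hVt
        linarith
      have h10 : (eigMax Q * (opNorm (Q * Gm) * s)^2 + eigMin Q * ε^2) / eigMin Q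
          = eigMax Q * (opNorm (Q * Gm) * s)^2 / eigMin Q + ε^2 := by
        field_simp
      have h11 : Real.sqrt (eigMax Q * (opNorm (Q * Gm) * s)^2 / eigMin Q + ε^2)
          ≤ Real.sqrt (eigMax Q * (opNorm (Q * Gm) * s)^2 / eigMin Q) + ε := by
        have h := sqrt_add_le' (x := eigMax Q * (opNorm (Q * Gm) * s)^2 / eigMin Q)
          (y := ε^2) (by positivity) (by positivity)
        rwa [Real.sqrt_sq hε.le] at h
      have h12 : Real.sqrt (eigMax Q * (opNorm (Q * Gm) * s)^2 / eigMin Q)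
          = Real.sqrt (varpi Q) * (opNorm (Q * Gm) * s) := by
        rw [show eigMax Q * (opNorm (Q * Gm) * s)^2 / eigMin Q
          = (eigMax Q / eigMin Q) * (opNorm (Q * Gm) * s)^2 by ring]
        rw [Real.sqrt_mul (div_nonneg hlmax.le hlmin.le) ((opNorm (Q * Gm) * s)^2),
          Real.sqrt_sq (mul_nonneg (opNorm_nonneg _) hs0)]
        rfl
      have hmono : Real.sqrt (Vf t / eigMin Q)
          ≤ Real.sqrt ((eigMax Q * (opNorm (Q * Gm) * s)^2 + eigMin Q * ε^2) / eigMin Q) :=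
        Real.sqrt_le_sqrt h9
      rw [h10] at hmono
      calc vnorm (z t) ≤ Real.sqrt (Vf t / eigMin Q) := h8
        _ ≤ Real.sqrt (eigMax Q * (opNorm (Q * Gm) * s)^2 / eigMin Q + ε^2) := hmono
        _ ≤ Real.sqrt (eigMax Q * (opNorm (Q * Gm) * s)^2 / eigMin Q) + ε := h11
        _ = Real.sqrt (varpi Q) * opNorm (Q * Gm) * s + ε := by rw [h12]; ring
  -- relating the statement's functions to stacked vector norms
  have hFχ : ∀ t, Real.sqrt (∑ i, ‖χ i t‖^2)
      = vnorm (fun a : Fin n × Fin m => χ a.1 t a.2) := by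
    intro t
    rw [vnorm_eq_sqrt]
    congr 1
    rw [Fintype.sum_prod_type]
    refine Finset.sum_congr rfl fun i _ => ?_
    rw [EuclideanSpace.norm_eq, Real.sq_sqrt (by positivity)]
    refine Finset.sum_congr rfl fun k _ => ?_
    rw [Real.norm_eq_abs, sq_abs]
  have hFφ : ∀ t, Real.sqrt (∑ i, ‖φ i t‖^2)
      = vnorm (fun a : Fin n × Fin p => φ a.1 t a.2) := by
    intro t
    rw [vnorm_eq_sqrt]
    congr 1
    rw [Fintype.sum_prod_type]
    refine Finset.sum_congr rfl fun i _ => ?_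
    rw [EuclideanSpace.norm_eq, Real.sq_sqrt (by positivity)]
    refine Finset.sum_congr rfl fun k _ => ?_
    rw [Real.norm_eq_abs, sq_abs]
  -- pointwise bound for the controller
  have hχle : ∀ t, vnorm (fun a : Fin n × Fin m => χ a.1 t a.2)
      ≤ opNorm (L * U) * opNorm M * vnorm (z t)
        + opNorm M * vnorm (fun a : Fin n × Fin p => φ a.1 t a.2) := by
    intro t
    rw [hXχz t]
    calc vnorm (-(((L * U) ⊗ₖ M) *ᵥ z t)
          + ((1 : Matrix (Fin n) (Fin n) ℝ) ⊗ₖ M) *ᵥ (fun a => φ a.1 t a.2))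
        ≤ vnorm (-(((L * U) ⊗ₖ M) *ᵥ z t))
          + vnorm (((1 : Matrix (Fin n) (Fin n) ℝ) ⊗ₖ M) *ᵥ (fun a => φ a.1 t a.2)) :=
          vnorm_add_le _ _
      _ = vnorm (((L * U) ⊗ₖ M) *ᵥ z t)
          + vnorm (((1 : Matrix (Fin n) (Fin n) ℝ) ⊗ₖ M) *ᵥ (fun a => φ a.1 t a.2)) := by
          rw [vnorm_neg]
      _ ≤ opNorm (L * U) * opNorm M * vnorm (z t)
          + opNorm (1 : Matrix (Fin n) (Fin n) ℝ) * opNorm M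
            * vnorm (fun a : Fin n × Fin p => φ a.1 t a.2) :=
          add_le_add (vnorm_kron_mulVec_le _ _ _) (vnorm_kron_mulVec_le _ _ _)
      _ ≤ opNorm (L * U) * opNorm M * vnorm (z t)
          + opNorm M * vnorm (fun a : Fin n × Fin p => φ a.1 t a.2) := by
          refine add_le_add le_rfl ?_
          have h1 := opNorm_one_le (ι := Fin n)
          have h2 := opNorm_nonneg M
          have h3 := vnorm_nonneg (fun a : Fin n × Fin p => φ a.1 t a.2)
          have h4 := mul_le_mul_of_nonneg_right
            (mul_le_mul_of_nonneg_right h1 h2) h3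
          rw [one_mul] at h4
          exact h4
  -- limsup machinery
  obtain ⟨cb, hcb⟩ := hφb
  have hbddφ : IsBoundedUnder (· ≤ ·) atTop (fun t => Real.sqrt (∑ i, ‖φ i t‖^2)) := by
    have hcb0 : 0 ≤ cb :=
      le_trans (norm_nonneg (φ ⟨0, Nat.pos_of_ne_zero hn⟩ 0)) (hcb _ 0 le_rfl)
    refine ⟨Real.sqrt (n * cb^2), ?_⟩
    rw [Filter.eventually_map]
    filter_upwards [eventually_ge_atTop (0:ℝ)] with t ht
    apply Real.sqrt_le_sqrt
    calc ∑ i, ‖φ i t‖^2 ≤ ∑ _i : Fin n, cb^2 :=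
        Finset.sum_le_sum fun i _ => pow_le_pow_left₀ (norm_nonneg _) (hcb i t ht) 2
      _ = n * cb^2 := by simp [Finset.sum_const, Finset.card_univ]
  have hLφ0 : 0 ≤ limsup (fun t => Real.sqrt (∑ i, ‖φ i t‖^2)) atTop :=
    le_limsup_of_frequently_le (Frequently.of_forall fun t => Real.sqrt_nonneg _) hbddφ
  have hC0 : 0 ≤ opNorm M * (opNorm (L * U)
      * (Real.sqrt (varpi Q) * opNorm (Q * Gm)) + 1) :=
    mul_nonneg (opNorm_nonneg M) (add_nonneg (mul_nonneg (opNorm_nonneg _)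
      (mul_nonneg (Real.sqrt_nonneg _) (opNorm_nonneg _))) zero_le_one)
  apply le_of_forall_pos_le_add
  intro δ hδ
  set C := opNorm M * (opNorm (L * U) * (Real.sqrt (varpi Q) * opNorm (Q * Gm)) + 1) with hC
  set D := opNorm (L * U) * opNorm M with hD
  have hD0 : 0 ≤ D := mul_nonneg (opNorm_nonneg _) (opNorm_nonneg _)
  set Lφ := limsup (fun t => Real.sqrt (∑ i, ‖φ i t‖^2)) atTop with hLφ
  set s := Lφ + δ / (2 * (C + 1)) with hsdef
  have hsgt : Lφ < s := by
    rw [hsdef]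
    have : 0 < δ / (2 * (C + 1)) := by positivity
    linarith
  have hs0 : 0 ≤ s := le_trans hLφ0 hsgt.le
  have hsev : ∀ᶠ t in atTop, vnorm (fun a : Fin n × Fin p => φ a.1 t a.2) ≤ s := by
    filter_upwards [eventually_lt_of_limsup_lt hsgt hbddφ] with t ht
    rw [← hFφ t]
    exact ht.le
  have hKEYs := hKEY s hs0 hsev (δ / (2 * (D + 1))) (by positivity)
  have hlimF : limsup (fun t => Real.sqrt (∑ i, ‖χ i t‖^2)) atTop
      ≤ C * s + D * (δ / (2 * (D + 1))) := by
    apply limsup_le_of_le (isCoboundedUnder_le_of_le atTop (x := 0)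
      fun t => Real.sqrt_nonneg _)
    filter_upwards [hKEYs, hsev] with t ht hwt
    rw [hFχ t]
    calc vnorm (fun a : Fin n × Fin m => χ a.1 t a.2)
        ≤ opNorm (L * U) * opNorm M * vnorm (z t)
          + opNorm M * vnorm (fun a : Fin n × Fin p => φ a.1 t a.2) := hχle t
      _ ≤ opNorm (L * U) * opNorm M
            * (Real.sqrt (varpi Q) * opNorm (Q * Gm) * s + δ / (2 * (D + 1)))
          + opNorm M * s := by
          refine add_le_add (mul_le_mul_of_nonneg_left ht ?_)
            (mul_le_mul_of_nonneg_left hwt (opNorm_nonneg M))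
          exact mul_nonneg (opNorm_nonneg _) (opNorm_nonneg _)
      _ = C * s + D * (δ / (2 * (D + 1))) := by
          rw [hC, hD]
          ring
  have hCs : C * s + D * (δ / (2 * (D + 1))) ≤ C * Lφ + δ := by
    have e1 : C * (δ / (2 * (C + 1))) ≤ δ / 2 := by
      have e : C * (δ / (2 * (C + 1))) = (C / (C + 1)) * (δ / 2) := by
        rw [div_mul_div_comm, ← mul_div_assoc]
        congr 1
        ring
      have h1 : C / (C + 1) ≤ 1 := by
        rw [div_le_one (by linarith)]
        linarith
      calc C * (δ / (2 * (C + 1))) = (C / (C + 1)) * (δ / 2) := e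
        _ ≤ 1 * (δ / 2) := mul_le_mul_of_nonneg_right h1 (by positivity)
        _ = δ / 2 := one_mul _
    have e2 : D * (δ / (2 * (D + 1))) ≤ δ / 2 := by
      have e : D * (δ / (2 * (D + 1))) = (D / (D + 1)) * (δ / 2) := by
        rw [div_mul_div_comm, ← mul_div_assoc]
        congr 1
        ring
      have h1 : D / (D + 1) ≤ 1 := by
        rw [div_le_one (by linarith)]
        linarith
      calc D * (δ / (2 * (D + 1))) = (D / (D + 1)) * (δ / 2) := e
        _ ≤ 1 * (δ / 2) := mul_le_mul_of_nonneg_right h1 (by positivity)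
        _ = δ / 2 := one_mul _
    have e3 : C * s = C * Lφ + C * (δ / (2 * (C + 1))) := by
      rw [hsdef]
      ring
    linarith
  linarith
end

section
/- Let S = [[0, ς], [−ς, 0]] with ς > 0, E = [1 0], and B = [1; 1]. Then for any constant γ_o > 0, there exist a matrix K_o ∈ ℝ^{2×1} and a symmetric positive definite matrix P ∈ ℝ^{2×2} such that P(S − K_oE) + (S − K_oE)ᵀP = −I and ‖PB‖·√(ϖ(P)) < γ_o. (Corollary 1 of the paper.) -/
open Filter Matrix Kronecker

lemma opNorm_col_le (a : ℝ) : opNorm !![a; a] ≤ Real.sqrt 2 * |a| := by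
  rw [opNorm]
  apply ContinuousLinearMap.opNorm_le_bound _ (by positivity)
  intro x
  rw [LinearMap.coe_toContinuousLinearMap', toEuclideanLin_apply]
  have hnx : ‖x‖ = |x 0| := by
    rw [EuclideanSpace.norm_eq]
    simp [Real.sqrt_sq_eq_abs]
  have hmv : (!![a; a] : Matrix (Fin 2) (Fin 1) ℝ) *ᵥ
      x.ofLp = fun _ => a * x 0 := by
    funext i
    fin_cases i <;> simp [Matrix.mulVec, dotProduct]
  rw [hmv, hnx]
  have h2 : ‖WithLp.toLp 2 (fun (_ : Fin 2) => a * x 0)‖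
      = Real.sqrt ((a * x 0)^2 + (a * x 0)^2) := by
    rw [EuclideanSpace.norm_eq]
    simp [Fin.sum_univ_two, sq_abs]
    rw [show (a * x 0)^2 + (a * x 0)^2 = 2 * ((|a| * |x 0|)^2) by
      simp [mul_pow, sq_abs]; ring,
      Real.sqrt_mul (by norm_num), Real.sqrt_sq (by positivity)]
  rw [h2, show (a * x 0)^2 + (a * x 0)^2 = (Real.sqrt 2 * |a| * |x 0|)^2 by
      have h2' : Real.sqrt 2 ^ 2 = 2 := Real.sq_sqrt (by norm_num)
      simp [mul_pow, sq_abs, h2']; ring,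
    Real.sqrt_sq (by positivity)]

lemma spec_lemma (t d : ℝ) :
    spectrum ℝ (!![t, -d; -d, t]) = {t - d, t + d} := by
  ext μ
  rw [spectrum.mem_iff, Matrix.isUnit_iff_isUnit_det, isUnit_iff_ne_zero, not_not,
    Set.mem_insert_iff, Set.mem_singleton_iff]
  have heq : (algebraMap ℝ (Matrix (Fin 2) (Fin 2) ℝ)) μ - !![t, -d; -d, t]
      = !![μ - t, d; d, μ - t] := by
    ext i j
    fin_cases i <;> fin_cases j <;> simp [Matrix.algebraMap_matrix_apply]
  rw [heq, Matrix.det_fin_two_of]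
  constructor
  · intro h
    have h2 : (μ - (t - d)) * (μ - (t + d)) = 0 := by ring_nf; ring_nf at h; linarith
    rcases mul_eq_zero.mp h2 with h | h
    · exact Or.inl (by linarith [sub_eq_zero.mp h])
    · exact Or.inr (by linarith [sub_eq_zero.mp h])
  · rintro (rfl | rfl) <;> ring

lemma lyap_lemma (t d ς c : ℝ) (hdς : d * ς = 1/2) (hc : c * (t^2 - d^2) = 1) :
    (!![t, -d; -d, t] : Matrix (Fin 2) (Fin 2) ℝ) *
      (!![0, ς; -ς, 0] - !![c * t; c * d] * !![(1 : ℝ), 0]) +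
      (!![0, ς; -ς, 0] - !![c * t; c * d] * !![(1 : ℝ), 0])ᵀ * !![t, -d; -d, t] = -1 := by
  ext i j
  fin_cases i <;> fin_cases j <;>
    simp [Matrix.mul_apply, Matrix.sub_apply, Matrix.transpose_apply,
      Matrix.add_apply, Matrix.neg_apply, Matrix.one_apply, Fin.sum_univ_two,
      Fin.sum_univ_one, Matrix.vecHead, Matrix.vecTail, Matrix.cons_val',
      Matrix.cons_val_zero, Matrix.cons_val_one, Matrix.head_cons,
      Matrix.empty_val']
  · linear_combination (-2 : ℝ) * hc + 2 * hdς
  · ring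
  · ring
  · linear_combination (-2 : ℝ) * hdς

lemma posdef_lemma (t d : ℝ) (hd : 0 < d) (htd : d < t) :
    (!![t, -d; -d, t] : Matrix (Fin 2) (Fin 2) ℝ).PosDef := by
  rw [Matrix.posDef_iff_dotProduct_mulVec]
  constructor
  · ext i j
    fin_cases i <;> fin_cases j <;> simp [Matrix.conjTranspose_apply]
  · intro x hx
    have hx2 : x 0 ≠ 0 ∨ x 1 ≠ 0 := by
      by_contra h
      push_neg at h
      exact hx (funext fun i => by fin_cases i <;> simp [h.1, h.2])
    have key : star x ⬝ᵥ (!![t, -d; -d, t] *ᵥ x)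
        = t * (x 0)^2 - 2 * d * (x 0 * x 1) + t * (x 1)^2 := by
      simp [dotProduct, Matrix.mulVec, Fin.sum_univ_two]
      ring
    rw [key]
    have h1 : 0 < (x 0)^2 + (x 1)^2 := by
      rcases hx2 with h | h <;> positivity
    nlinarith [sq_nonneg (x 0 - x 1), sq_nonneg (x 0 + x 1)]

/-- **Corollary 1**: for `S = [[0, ς], [−ς, 0]]`, `E = [1 0]`, `B = [1; 1]` and any `γ_o > 0`,
there exist `K_o` and `P = Pᵀ > 0` with `P(S − K_oE) + (S − K_oE)ᵀP = −I` and
`‖PB‖·√(ϖ(P)) < γ_o`. -/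
theorem stmt3 (ς : ℝ) (hς : 0 < ς) (γo : ℝ) (hγo : 0 < γo) :
    ∃ (Ko : Matrix (Fin 2) (Fin 1) ℝ) (P : Matrix (Fin 2) (Fin 2) ℝ),
      P.IsSymm ∧ P.PosDef ∧
      P * (!![0, ς; -ς, 0] - Ko * !![(1 : ℝ), 0]) +
        (!![0, ς; -ς, 0] - Ko * !![(1 : ℝ), 0])ᵀ * P = -1 ∧
      opNorm (P * !![(1 : ℝ); 1]) * Real.sqrt (varpi P) < γo := by
  set d : ℝ := 1 / (2 * ς) with hd_def
  have hd : 0 < d := by positivity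
  set t : ℝ := Real.sqrt (d ^ 2 + γo ^ 2 / 4) with ht_def
  have ht2 : t ^ 2 = d ^ 2 + γo ^ 2 / 4 := Real.sq_sqrt (by positivity)
  have ht0 : 0 ≤ t := Real.sqrt_nonneg _
  have htd : d < t := by nlinarith
  have hdiff : t ^ 2 - d ^ 2 = γo ^ 2 / 4 := by linarith
  have hne : t ^ 2 - d ^ 2 ≠ 0 := by rw [hdiff]; positivity
  have hdς : d * ς = 1 / 2 := by rw [hd_def]; field_simp
  set c : ℝ := 1 / (t ^ 2 - d ^ 2) with hc_def
  have hc : c * (t ^ 2 - d ^ 2) = 1 := by rw [hc_def]; field_simp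
  refine ⟨!![c * t; c * d], !![t, -d; -d, t], ?_, posdef_lemma t d hd htd,
    lyap_lemma t d ς c hdς hc, ?_⟩
  · ext i j
    fin_cases i <;> fin_cases j <;> simp [Matrix.transpose_apply]
  · -- norm inequality
    have heigMax : eigMax (!![t, -d; -d, t]) = t + d := by
      rw [eigMax, spec_lemma, csSup_pair]
      exact sup_eq_right.mpr (by linarith)
    have heigMin : eigMin (!![t, -d; -d, t]) = t - d := by
      rw [eigMin, spec_lemma, csInf_pair]
      exact inf_eq_left.mpr (by linarith)
    have hvarpi : varpi (!![t, -d; -d, t]) = (t + d) / (t - d) := by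
      rw [varpi, heigMax, heigMin]
    have hPB : (!![t, -d; -d, t] : Matrix (Fin 2) (Fin 2) ℝ) * !![(1 : ℝ); 1]
        = !![t - d; t - d] := by
      ext i j
      fin_cases i <;> fin_cases j <;>
        simp [Matrix.mul_apply, Fin.sum_univ_two] <;> ring
    have hop : opNorm ((!![t, -d; -d, t] : Matrix (Fin 2) (Fin 2) ℝ) * !![(1 : ℝ); 1])
        ≤ Real.sqrt 2 * (t - d) := by
      rw [hPB]
      calc opNorm !![t - d; t - d] ≤ Real.sqrt 2 * |t - d| := opNorm_col_le _
        _ = Real.sqrt 2 * (t - d) := by rw [abs_of_pos (by linarith)]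
    have hbound : Real.sqrt 2 * (t - d) * Real.sqrt ((t + d) / (t - d)) < γo := by
      have h1 : Real.sqrt 2 * (t - d) * Real.sqrt ((t + d) / (t - d))
          = Real.sqrt (2 * (t - d)^2 * ((t + d) / (t - d))) := by
        rw [Real.sqrt_mul (by positivity), Real.sqrt_mul (by norm_num),
          Real.sqrt_sq (by linarith)]
      have h2 : 2 * (t - d)^2 * ((t + d) / (t - d)) = 2 * (t^2 - d^2) := by
        have : t - d ≠ 0 := by linarith
        field_simp
        ring
      rw [h1, h2, hdiff, show 2 * (γo^2/4) = γo^2/2 by ring]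
      calc Real.sqrt (γo^2/2) < Real.sqrt (γo^2) :=
            Real.sqrt_lt_sqrt (by positivity) (by nlinarith)
        _ = γo := Real.sqrt_sq hγo.le
    rw [hvarpi]
    calc opNorm _ * Real.sqrt ((t + d) / (t - d))
        ≤ Real.sqrt 2 * (t - d) * Real.sqrt ((t + d) / (t - d)) :=
          mul_le_mul_of_nonneg_right hop (Real.sqrt_nonneg _)
      _ < γo := hbound
end

section
/- Let S ∈ ℝ^{p×p}, B ∈ ℝ^{p×m}, and suppose G = Gᵀ > 0 is a solution of the algebraic Riccati equation SᵀG + GS − λ*·GBBᵀG + εI = 0 for some constants λ* > 0 and ε > 0. Let M = BᵀG/2. Then for every complex number λ with Re λ ≥ λ*, all eigenvalues of S − λBM have strictly negative real parts; consequently, if H ∈ ℝ^{(n−1)×(n−1)} is a matrix all of whose eigenvalues λ_i satisfy Re λ_i ≥ λ*, then A_ζ = I_{n−1} ⊗ S − H ⊗ BM is Hurwitz. (Remark following Lemma 2 of the paper.) -/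
open Filter Matrix Kronecker

section Helpers

open Polynomial

noncomputable def mapC {a b : Type*} (X : Matrix a b ℝ) : Matrix a b ℂ := X.map Complex.ofReal

lemma mapC_smul {a b : Type*} (r : ℝ) (X : Matrix a b ℝ) :
    mapC (r • X) = (r : ℂ) • mapC X := by
  ext i j; simp [mapC]

lemma mapC_conjT {a b : Type*} (X : Matrix a b ℝ) :
    (mapC X)ᴴ = mapC Xᵀ := by
  ext i j; simp [mapC, Matrix.conjTranspose_apply]

lemma mapC_mul {a b c : Type*} [Fintype b] (X : Matrix a b ℝ) (Y : Matrix b c ℝ) :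
    mapC (X * Y) = mapC X * mapC Y := by
  ext i j
  simp [mapC, Matrix.mul_apply]

lemma mapC_add {a b : Type*} (X Y : Matrix a b ℝ) : mapC (X + Y) = mapC X + mapC Y := by
  ext i j; simp [mapC]

lemma mapC_sub {a b : Type*} (X Y : Matrix a b ℝ) : mapC (X - Y) = mapC X - mapC Y := by
  ext i j; simp [mapC]

lemma mapC_one {a : Type*} [DecidableEq a] : mapC (1 : Matrix a a ℝ) = 1 := by
  ext i j; by_cases h : i = j <;> simp [mapC, Matrix.one_apply, h]

lemma herm_quad {n : Type*} [Fintype n] (X : Matrix n n ℂ) (v : n → ℂ) :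
    star v ⬝ᵥ (Xᴴ *ᵥ v) = star (star v ⬝ᵥ (X *ᵥ v)) := by
  rw [star_dotProduct, Matrix.star_mulVec, Matrix.conjTranspose_conjTranspose,
    Matrix.dotProduct_mulVec]

lemma spec_det_iff {n : Type*} [Fintype n] [DecidableEq n] (K : Matrix n n ℂ) (μ : ℂ) :
    μ ∈ spectrum ℂ K ↔ (μ • (1 : Matrix n n ℂ) - K).det = 0 := by
  rw [spectrum.mem_iff, Algebra.algebraMap_eq_smul_one]
  rw [Matrix.isUnit_iff_isUnit_det, isUnit_iff_ne_zero, not_not]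

lemma charm_eval {n : Type*} [Fintype n] [DecidableEq n] (K : Matrix n n ℂ) (r : ℂ) :
    (Matrix.charmatrix K).map (Polynomial.eval r) = r • (1 : Matrix n n ℂ) - K := by
  ext i j
  by_cases h : i = j <;>
    simp [h, Matrix.charmatrix_apply, Matrix.smul_apply, Matrix.one_apply, Matrix.diagonal_apply]

lemma root_spec {n : Type*} [Fintype n] [DecidableEq n] (K : Matrix n n ℂ) (r : ℂ)
    (h : (K.charpoly).IsRoot r) : r ∈ spectrum ℂ K := by
  have h2 : Polynomial.eval r K.charpoly = ((Matrix.charmatrix K).map (Polynomial.eval r)).det :=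
    RingHom.map_det (Polynomial.evalRingHom r) _
  rw [spec_det_iff]
  rw [← charm_eval, ← h2, h]

lemma quad_re {n : Type*} [Fintype n] (P : Matrix n n ℝ) (v : n → ℂ) :
    (star v ⬝ᵥ (mapC P *ᵥ v)).re =
      (fun i => (v i).re) ⬝ᵥ (P *ᵥ fun i => (v i).re) +
      (fun i => (v i).im) ⬝ᵥ (P *ᵥ fun i => (v i).im) := by
  simp only [mapC, dotProduct, Matrix.mulVec, Pi.star_apply, Matrix.map_apply]
  rw [Complex.re_sum, ← Finset.sum_add_distrib]
  refine Finset.sum_congr rfl fun i _ => ?_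
  rw [Finset.mul_sum, Complex.re_sum]
  simp only [Finset.mul_sum, ← Finset.sum_add_distrib]
  refine Finset.sum_congr rfl fun j _ => ?_
  simp only [Complex.mul_re, Complex.mul_im, RCLike.star_def, Complex.conj_re,
    Complex.conj_im, Complex.ofReal_re, Complex.ofReal_im]
  ring

lemma real_quad_nonneg {n : Type*} [Fintype n] {P : Matrix n n ℝ} (hP : P.PosSemidef)
    (z : n → ℝ) : 0 ≤ z ⬝ᵥ (P *ᵥ z) := by
  simpa using hP.re_dotProduct_nonneg z

lemma real_quad_pos {n : Type*} [Fintype n] {P : Matrix n n ℝ} (hP : P.PosDef)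
    {z : n → ℝ} (hz : z ≠ 0) : 0 < z ⬝ᵥ (P *ᵥ z) := by
  simpa using hP.re_dotProduct_pos hz
lemma part1_core (p m : ℕ) (S : Matrix (Fin p) (Fin p) ℝ) (B : Matrix (Fin p) (Fin m) ℝ)
    (G : Matrix (Fin p) (Fin p) ℝ) (hGsymm : G.IsSymm) (hGpos : G.PosDef)
    (lamStar eps : ℝ) (heps : 0 < eps)
    (hric : Sᵀ * G + G * S - lamStar • (G * B * Bᵀ * G) + eps • (1 : Matrix (Fin p) (Fin p) ℝ) = 0)
    (M : Matrix (Fin m) (Fin p) ℝ) (hM : M = (1 / 2 : ℝ) • (Bᵀ * G)) :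
    ∀ lam : ℂ, lamStar ≤ lam.re →
      ∀ μ ∈ spectrum ℂ (S.map Complex.ofReal - lam • (B * M).map Complex.ofReal), μ.re < 0 := by
  intro lam hlam μ hμ
  set Q : Matrix (Fin p) (Fin p) ℝ := G * B * Bᵀ * G with hQ
  have hGsymm' : Gᵀ = G := hGsymm
  have hBMQ : G * (B * M) = (1 / 2 : ℝ) • Q := by
    simp [hM, hQ, mul_smul_comm, Matrix.mul_assoc]
  have hMBG : (B * M)ᵀ * G = (1 / 2 : ℝ) • Q := by
    simp [hM, hQ, Matrix.transpose_mul, Matrix.transpose_smul, Matrix.transpose_transpose,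
      hGsymm', Matrix.smul_mul, Matrix.mul_assoc]
  have hric' : Sᵀ * G + G * S = lamStar • Q - eps • 1 := by
    rw [sub_add, sub_eq_zero] at hric; exact hric
  have hQpsd : Q.PosSemidef := by
    have h1 : Q = (Bᵀ * G)ᵀ * (Bᵀ * G) := by
      rw [Matrix.transpose_mul, hGsymm', Matrix.transpose_transpose, hQ]
      simp [Matrix.mul_assoc]
    rw [h1, ← Matrix.conjTranspose_eq_transpose_of_trivial]
    exact Matrix.posSemidef_conjTranspose_mul_self _
  rw [spec_det_iff] at hμ
  obtain ⟨v, hv0, hv⟩ := (Matrix.exists_mulVec_eq_zero_iff).mpr hμ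
  set A₁ : Matrix (Fin p) (Fin p) ℂ := mapC S - lam • mapC (B * M) with hA₁
  have heig : A₁ *ᵥ v = μ • v := by
    rw [Matrix.sub_mulVec, Matrix.smul_mulVec, Matrix.one_mulVec, sub_eq_zero] at hv
    exact hv.symm
  have hG'H : (mapC G)ᴴ = mapC G := by rw [mapC_conjT, hGsymm']
  have hGC : mapC G * mapC (B * M) = ((2 : ℂ))⁻¹ • mapC Q := by
    rw [← mapC_mul, hBMQ, mapC_smul]; norm_num
  have hCG : (mapC (B * M))ᴴ * mapC G = ((2 : ℂ))⁻¹ • mapC Q := by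
    rw [mapC_conjT, ← mapC_mul, hMBG, mapC_smul]; norm_num
  have hSG : (mapC S)ᴴ * mapC G + mapC G * mapC S =
      (lamStar : ℂ) • mapC Q - (eps : ℂ) • 1 := by
    rw [mapC_conjT, ← mapC_mul, ← mapC_mul, ← mapC_add, hric', mapC_sub, mapC_smul,
      mapC_smul, mapC_one]
  have hmat : mapC G * A₁ + A₁ᴴ * mapC G =
      ((lamStar - lam.re : ℝ) : ℂ) • mapC Q - (eps : ℂ) • 1 := by
    have hA₁H : A₁ᴴ = (mapC S)ᴴ - (starRingEnd ℂ) lam • (mapC (B * M))ᴴ := by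
      rw [hA₁, Matrix.conjTranspose_sub, Matrix.conjTranspose_smul]; rfl
    have hcoef : lam • ((2 : ℂ)⁻¹ • mapC Q) + (starRingEnd ℂ) lam • ((2 : ℂ)⁻¹ • mapC Q)
        = ((lam.re : ℝ) : ℂ) • mapC Q := by
      rw [smul_smul, smul_smul, ← add_smul]
      congr 1
      have h := Complex.add_conj lam
      push_cast at h ⊢
      field_simp
      linear_combination h
    rw [hA₁, hA₁H, Matrix.mul_sub, Matrix.sub_mul, Matrix.mul_smul, Matrix.smul_mul,
      hGC, hCG]
    have hre : mapC G * mapC S - lam • ((2:ℂ)⁻¹ • mapC Q) +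
        ((mapC S)ᴴ * mapC G - (starRingEnd ℂ) lam • ((2:ℂ)⁻¹ • mapC Q)) =
        ((mapC S)ᴴ * mapC G + mapC G * mapC S) -
        (lam • ((2:ℂ)⁻¹ • mapC Q) + (starRingEnd ℂ) lam • ((2:ℂ)⁻¹ • mapC Q)) := by
      abel
    rw [hre, hSG, hcoef]
    push_cast [sub_smul]
    abel
  set c1 := star v ⬝ᵥ (mapC G *ᵥ v) with hc1def
  set c2 := star v ⬝ᵥ (mapC Q *ᵥ v) with hc2def
  set c3 := star v ⬝ᵥ v with hc3def
  have h1 : star v ⬝ᵥ ((mapC G * A₁) *ᵥ v) = μ * c1 := by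
    rw [← Matrix.mulVec_mulVec, heig, Matrix.mulVec_smul, dotProduct_smul, smul_eq_mul]
  have h2 : star v ⬝ᵥ ((A₁ᴴ * mapC G) *ᵥ v) = star (μ * c1) := by
    have e : A₁ᴴ * mapC G = (mapC G * A₁)ᴴ := by rw [Matrix.conjTranspose_mul, hG'H]
    rw [e, herm_quad, h1]
  have hLHS : star v ⬝ᵥ ((mapC G * A₁ + A₁ᴴ * mapC G) *ᵥ v) = ((2 * (μ * c1).re : ℝ) : ℂ) := by
    rw [Matrix.add_mulVec, dotProduct_add, h1, h2]
    exact Complex.add_conj _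
  have hRHS : star v ⬝ᵥ ((((lamStar - lam.re : ℝ) : ℂ) • mapC Q - (eps : ℂ) • 1) *ᵥ v)
      = ((lamStar - lam.re : ℝ) : ℂ) * c2 - (eps : ℂ) * c3 := by
    rw [Matrix.sub_mulVec, Matrix.smul_mulVec, Matrix.smul_mulVec,
      Matrix.one_mulVec, dotProduct_sub, dotProduct_smul, dotProduct_smul,
      smul_eq_mul, smul_eq_mul]
  have hkey : (2 * (μ * c1).re : ℝ) = (lamStar - lam.re) * c2.re - eps * c3.re := by
    have h3 := congrArg (fun X => star v ⬝ᵥ (X *ᵥ v)) hmat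
    beta_reduce at h3
    rw [hLHS, hRHS] at h3
    have h4 := congrArg Complex.re h3
    simpa [Complex.re_ofReal_mul] using h4
  have hc1star : c1 = star c1 := by
    have h5 := herm_quad (mapC G) v
    rw [hG'H] at h5
    exact h5
  have hc1im : c1.im = 0 := by
    have := congrArg Complex.im hc1star
    simp only [Complex.star_def, Complex.conj_im] at this
    linarith
  have hxy : (fun i => (v i).re) ≠ 0 ∨ (fun i => (v i).im) ≠ 0 := by
    by_contra hcon
    push_neg at hcon
    apply hv0
    funext i
    have hx := congrFun hcon.1 i
    have hy := congrFun hcon.2 i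
    simp only [Pi.zero_apply] at hx hy
    exact Complex.ext hx hy
  have hc1re : 0 < c1.re := by
    rw [hc1def, quad_re]
    rcases hxy with h | h
    · exact add_pos_of_pos_of_nonneg (real_quad_pos hGpos h)
        (real_quad_nonneg hGpos.posSemidef _)
    · exact add_pos_of_nonneg_of_pos (real_quad_nonneg hGpos.posSemidef _)
        (real_quad_pos hGpos h)
  have hc2re : 0 ≤ c2.re := by
    rw [hc2def, quad_re]
    exact add_nonneg (real_quad_nonneg hQpsd _) (real_quad_nonneg hQpsd _)
  have h1pd : (1 : Matrix (Fin p) (Fin p) ℝ).PosDef := by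
    rw [← Matrix.diagonal_one]
    exact Matrix.posDef_diagonal_iff.mpr fun i => one_pos
  have hc3re : 0 < c3.re := by
    have e : c3 = star v ⬝ᵥ (mapC 1 *ᵥ v) := by rw [mapC_one, Matrix.one_mulVec]
    rw [e, quad_re]
    rcases hxy with h | h
    · exact add_pos_of_pos_of_nonneg (real_quad_pos h1pd h)
        (real_quad_nonneg h1pd.posSemidef _)
    · exact add_pos_of_nonneg_of_pos (real_quad_nonneg h1pd.posSemidef _)
        (real_quad_pos h1pd h)
  have hmu1 : (μ * c1).re = μ.re * c1.re := by
    rw [Complex.mul_re, hc1im]; ring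
  rw [hmu1] at hkey
  have h5 : (lamStar - lam.re) * c2.re ≤ 0 :=
    mul_nonpos_of_nonpos_of_nonneg (by linarith) hc2re
  have h6 : 0 < eps * c3.re := mul_pos heps hc3re
  by_contra hcon
  push_neg at hcon
  have : 0 ≤ μ.re * c1.re := mul_nonneg hcon hc1re.le
  linarith
lemma list_iter {n q : Type*} [Fintype n] [Fintype q] [DecidableEq n] [DecidableEq q]
    (S' C' : Matrix n n ℂ) (K : Matrix q q ℂ) (W : Matrix n q ℂ) (μ : ℂ)
    (hW : S' * W - C' * W * K = μ • W) (l : List ℂ)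
    (hinv : ∀ r ∈ l, IsUnit (S' - r • C' - μ • 1)) :
    ∃ E : Matrix n n ℂ, W = E * W * (l.map fun r => K - r • 1).prod := by
  induction l with
  | nil => exact ⟨1, by simp⟩
  | cons r l ih =>
    obtain ⟨E, hE⟩ := ih fun s hs => hinv s (List.mem_cons_of_mem _ hs)
    obtain ⟨u, hu⟩ := hinv r List.mem_cons_self
    have h1 : S' * W = μ • W + C' * W * K := by rw [← hW]; abel
    have hRW : (S' - r • C' - μ • 1) * W = C' * W * (K - r • 1) := by
      calc (S' - r • C' - μ • 1) * W = S' * W - r • (C' * W) - μ • W := by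
            rw [Matrix.sub_mul, Matrix.sub_mul, Matrix.smul_mul, Matrix.smul_mul,
              Matrix.one_mul]
        _ = C' * W * K - r • (C' * W) := by rw [h1]; abel
        _ = C' * W * (K - r • 1) := by
            rw [Matrix.mul_sub, Matrix.mul_smul, Matrix.mul_one]
    have hWr : W = (↑u⁻¹ : Matrix n n ℂ) * (C' * W * (K - r • 1)) := by
      rw [← hRW, ← hu, ← Matrix.mul_assoc, Units.inv_mul, Matrix.one_mul]
    refine ⟨E * (↑u⁻¹ : Matrix n n ℂ) * C', ?_⟩
    rw [List.map_cons, List.prod_cons]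
    calc W = E * W * (l.map fun r => K - r • 1).prod := hE
      _ = E * ((↑u⁻¹ : Matrix n n ℂ) * (C' * W * (K - r • 1))) *
            (l.map fun r => K - r • 1).prod := by rw [← hWr]
      _ = E * (↑u⁻¹ : Matrix n n ℂ) * C' * W * ((K - r • 1) * (l.map fun r => K - r • 1).prod) := by
            simp only [Matrix.mul_assoc]

lemma kron_vec_matrix {k p : ℕ} (A : Matrix (Fin k) (Fin k) ℂ) (Bm : Matrix (Fin p) (Fin p) ℂ)
    (v : Fin k × Fin p → ℂ) (j : Fin k) (i : Fin p) :
    ((A ⊗ₖ Bm) *ᵥ v) (j, i) = (Bm * (Matrix.of fun a b => v (b, a)) * Aᵀ) i j := by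
  have hL : ((A ⊗ₖ Bm) *ᵥ v) (j, i) = ∑ a : Fin k, ∑ b : Fin p, A j a * Bm i b * v (a, b) := by
    simp only [Matrix.mulVec, dotProduct, kroneckerMap_apply]
    rw [Fintype.sum_prod_type]
  have hR : (Bm * (Matrix.of fun a b => v (b, a)) * Aᵀ) i j
      = ∑ a : Fin k, ∑ b : Fin p, A j a * Bm i b * v (a, b) := by
    simp only [Matrix.mul_apply, Matrix.transpose_apply, Matrix.of_apply, Finset.sum_mul]
    exact Finset.sum_congr rfl fun a _ => Finset.sum_congr rfl fun b _ => by ring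
  rw [hL, hR]


lemma charpoly_facts {q : Type*} [Fintype q] [DecidableEq q] (K : Matrix q q ℂ) :
    ((K.charpoly.roots.toList).map fun r => K - r • 1).prod = 0 ∧
    ∀ r ∈ K.charpoly.roots.toList, r ∈ spectrum ℂ K := by
  have hmonic := K.charpoly_monic
  constructor
  · have hsplits : K.charpoly
        = (K.charpoly.roots.map fun a => Polynomial.X - Polynomial.C a).prod :=
      (IsAlgClosed.splits _).eq_prod_roots_of_monic hmonic
    have hlist : K.charpoly
        = ((K.charpoly.roots.toList).map fun a => Polynomial.X - Polynomial.C a).prod := by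
      conv_lhs => rw [hsplits, ← Multiset.coe_toList K.charpoly.roots]
      rw [Multiset.map_coe, Multiset.prod_coe]
    have hCH := Matrix.aeval_self_charpoly K
    rw [hlist, map_list_prod (Polynomial.aeval K), List.map_map] at hCH
    rw [← hCH]
    congr 1
    refine List.map_congr_left fun r _ => ?_
    simp [Function.comp, map_sub, Polynomial.aeval_X, Polynomial.aeval_C,
      Algebra.algebraMap_eq_smul_one]
  · intro r hr
    rw [Multiset.mem_toList, Polynomial.mem_roots'] at hr
    exact root_spec K r hr.2

end Helpers

/-- Remark following Lemma 2: if `G = Gᵀ > 0` solves the Riccati equation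
`SᵀG + GS − λ*·GBBᵀG + εI = 0` and `M = BᵀG/2`, then `S − λBM` is Hurwitz for every complex `λ`
with `Re λ ≥ λ*`; consequently `A_ζ = I ⊗ S − H ⊗ BM` is Hurwitz whenever all eigenvalues of `H`
have real part at least `λ*`. -/
theorem stmt4 (p m : ℕ) (S : Matrix (Fin p) (Fin p) ℝ) (B : Matrix (Fin p) (Fin m) ℝ)
    (G : Matrix (Fin p) (Fin p) ℝ) (hGsymm : G.IsSymm) (hGpos : G.PosDef)
    (lamStar eps : ℝ) (hlam : 0 < lamStar) (heps : 0 < eps)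
    (hric : Sᵀ * G + G * S - lamStar • (G * B * Bᵀ * G) + eps • (1 : Matrix (Fin p) (Fin p) ℝ) = 0)
    (M : Matrix (Fin m) (Fin p) ℝ) (hM : M = (1 / 2 : ℝ) • (Bᵀ * G)) :
    (∀ lam : ℂ, lamStar ≤ lam.re →
      IsHurwitzC (S.map Complex.ofReal - lam • (B * M).map Complex.ofReal)) ∧
    ∀ (k : ℕ) (H : Matrix (Fin k) (Fin k) ℝ),
      (∀ μ ∈ spectrum ℂ (H.map Complex.ofReal), lamStar ≤ μ.re) →
      IsHurwitz ((1 : Matrix (Fin k) (Fin k) ℝ) ⊗ₖ S - H ⊗ₖ (B * M)) := by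
  have hpart1 := part1_core p m S B G hGsymm hGpos lamStar eps heps hric M hM
  constructor
  · intro lam hl μ hμ
    exact hpart1 lam hl μ hμ
  · intro k H hH μ hμ
    by_contra hcon
    push_neg at hcon
    have hmap : ((1 : Matrix (Fin k) (Fin k) ℝ) ⊗ₖ S - H ⊗ₖ (B * M)).map Complex.ofReal =
        (1 : Matrix (Fin k) (Fin k) ℂ) ⊗ₖ mapC S - mapC H ⊗ₖ mapC (B * M) := by
      ext ⟨a, b⟩ ⟨c, d⟩
      by_cases h : a = c <;>
        simp [mapC, Matrix.sub_apply, Matrix.kroneckerMap_apply, Matrix.one_apply, h]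
    rw [hmap] at hμ
    rw [spec_det_iff] at hμ
    obtain ⟨v, hv0, hv⟩ := (Matrix.exists_mulVec_eq_zero_iff).mpr hμ
    have heig : ((1 : Matrix (Fin k) (Fin k) ℂ) ⊗ₖ mapC S - mapC H ⊗ₖ mapC (B * M)) *ᵥ v
        = μ • v := by
      rw [Matrix.sub_mulVec, Matrix.smul_mulVec, Matrix.one_mulVec, sub_eq_zero] at hv
      exact hv.symm
    set W : Matrix (Fin p) (Fin k) ℂ := Matrix.of fun a b => v (b, a) with hWdef
    have hW : mapC S * W - mapC (B * M) * W * (mapC H)ᵀ = μ • W := by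
      ext i j
      have h := congrFun heig (j, i)
      have e1 := kron_vec_matrix (1 : Matrix (Fin k) (Fin k) ℂ) (mapC S) v j i
      have e2 := kron_vec_matrix (mapC H) (mapC (B * M)) v j i
      rw [Matrix.transpose_one, Matrix.mul_one] at e1
      rw [Matrix.sub_mulVec] at h
      simp only [Pi.sub_apply, e1, e2, Pi.smul_apply, smul_eq_mul] at h
      simpa [Matrix.sub_apply, Matrix.smul_apply, hWdef, smul_eq_mul] using h
    obtain ⟨hzero, hspec⟩ := charpoly_facts ((mapC H)ᵀ)
    have hinv : ∀ r ∈ ((mapC H)ᵀ).charpoly.roots.toList,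
        IsUnit (mapC S - r • mapC (B * M) - μ • 1) := by
      intro r hr
      have hrs := hspec r hr
      have hrsH : r ∈ spectrum ℂ (mapC H) := by
        rw [spec_det_iff] at hrs
        rw [spec_det_iff, ← Matrix.det_transpose, Matrix.transpose_sub,
          Matrix.transpose_smul, Matrix.transpose_one]
        exact hrs
      have hre : lamStar ≤ r.re := hH r hrsH
      have hnot : μ ∉ spectrum ℂ (mapC S - r • mapC (B * M)) := fun hmem =>
        absurd (hpart1 r hre μ hmem) (not_lt.mpr hcon)
      have hunit := spectrum.notMem_iff.mp hnot
      rw [Algebra.algebraMap_eq_smul_one] at hunit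
      have heq : mapC S - r • mapC (B * M) - μ • 1
          = -(μ • 1 - (mapC S - r • mapC (B * M))) := (neg_sub _ _).symm
      rw [heq]
      exact hunit.neg
    obtain ⟨E, hE⟩ := list_iter (mapC S) (mapC (B * M)) ((mapC H)ᵀ) W μ hW
      ((mapC H)ᵀ).charpoly.roots.toList hinv
    rw [hzero, Matrix.mul_zero] at hE
    obtain ⟨x, hx⟩ := Function.ne_iff.mp hv0
    apply hx
    have hzW := congrFun (congrFun hE x.2) x.1
    simpa [hWdef] using hzW
end

section
/- Let ς > 0 and ρ > 0, and define S̄ = [[−ς−ρ, ς], [−ρ, 0]] and P = (1/(2ς))·[[1, −1], [−1, (ρ+2ς)/ρ]]. Then P is symmetric positive definite and satisfies the Lyapunov equation P S̄ + S̄ᵀ P = −I. (Claim established in the proof of Corollary 1 of the paper.) -/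
open Filter Matrix Kronecker

/-- Claim from the proof of Corollary 1: `P = (1/(2ς))·[[1, −1], [−1, (ρ+2ς)/ρ]]` is symmetric
positive definite and solves the Lyapunov equation `P S̄ + S̄ᵀ P = −I` for
`S̄ = [[−ς−ρ, ς], [−ρ, 0]]`. -/
theorem stmt6 (ς ρ : ℝ) (hς : 0 < ς) (hρ : 0 < ρ)
    (Sbar P : Matrix (Fin 2) (Fin 2) ℝ)
    (hSbar : Sbar = !![-ς - ρ, ς; -ρ, 0])
    (hP : P = (1 / (2 * ς)) • !![(1 : ℝ), -1; -1, (ρ + 2 * ς) / ρ]) :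
    P.IsSymm ∧ P.PosDef ∧ P * Sbar + Sbarᵀ * P = -1 := by
  subst hSbar hP
  have hsym : ((1 / (2 * ς)) • !![(1 : ℝ), -1; -1, (ρ + 2 * ς) / ρ]).IsSymm := by
    rw [Matrix.IsSymm]
    ext i j
    fin_cases i <;> fin_cases j <;> simp
  refine ⟨hsym, ⟨hsym, ?_⟩, ?_⟩
  · intro x hx
  
    simp only [Finsupp.sum_fintype, zero_mul, mul_zero, Finset.sum_const_zero, add_zero, implies_true, Matrix.mulVec, Fin.sum_univ_two, Matrix.smul_apply,
      Matrix.cons_val', Matrix.cons_val_zero, Matrix.cons_val_one, Matrix.head_cons,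
      Matrix.head_fin_const, Matrix.empty_val', Matrix.cons_val_fin_one, star_trivial,
      smul_eq_mul]
    have hx0 : x 0 ≠ 0 ∨ x 1 ≠ 0 := by
      by_contra h'
      push_neg at h'
      exact hx (Finsupp.ext fun i => by fin_cases i <;> simp [h'.1, h'.2])
    have key : 0 < (x 0 - x 1)^2 + (2*ς/ρ) * (x 1)^2 := by
      rcases hx0 with h0 | h1
      · rcases eq_or_ne (x 1) 0 with h1 | h1
        · have h0' : x 0 - x 1 ≠ 0 := by rw [h1]; simpa using h0
          have : 0 < (x 0 - x 1)^2 := lt_of_le_of_ne (sq_nonneg _) (Ne.symm (pow_ne_zero 2 h0'))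
          nlinarith [sq_nonneg (x 1), mul_nonneg (le_of_lt (by positivity : (0:ℝ) < 2*ς/ρ)) (sq_nonneg (x 1))]
        · have h1' : 0 < (x 1)^2 := lt_of_le_of_ne (sq_nonneg _) (Ne.symm (pow_ne_zero 2 h1))
          have : 0 < (2*ς/ρ) * (x 1)^2 := mul_pos (by positivity) h1'
          nlinarith [sq_nonneg (x 0 - x 1)]
      · have h1' : 0 < (x 1)^2 := lt_of_le_of_ne (sq_nonneg _) (Ne.symm (pow_ne_zero 2 h1))
        have : 0 < (2*ς/ρ) * (x 1)^2 := mul_pos (by positivity) h1'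
        nlinarith [sq_nonneg (x 0 - x 1)]
    have h2 : (0:ℝ) < 1 / (2*ς) := by positivity
    have := mul_pos h2 key
    calc (0:ℝ) < 1/(2*ς) * ((x 0 - x 1)^2 + (2*ς/ρ) * (x 1)^2) := this
      _ = x 0 * (1 / (2 * ς) * 1 * x 0 + 1 / (2 * ς) * -1 * x 1) +
          x 1 * (1 / (2 * ς) * -1 * x 0 + 1 / (2 * ς) * ((ρ + 2 * ς) / ρ) * x 1) := by
        field_simp; ring
      _ = _ := by simp; ring
  · have ht : (!![-ς - ρ, ς; -ρ, 0])ᵀ = !![-ς - ρ, -ρ; ς, 0] := by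
      ext i j; fin_cases i <;> fin_cases j <;> rfl
    rw [ht]
    ext i j
    fin_cases i <;> fin_cases j <;>
      simp [Matrix.mul_apply, Fin.sum_univ_two, Matrix.one_apply, Matrix.transpose_apply] <;>
      field_simp <;> ring
end

section
/- Let A_ζ ∈ ℝ^{m×m}, D ∈ ℝ^{m×k}, and let Q = Qᵀ > 0 be a symmetric positive definite matrix satisfying QA_ζ + A_ζᵀQ = −2I. Let φ : [0,∞) → ℝ^k be continuous and bounded, and let ζ : [0,∞) → ℝ^m be a differentiable solution of ζ'(t) = A_ζ ζ(t) + D φ(t). Then limsup_{t→∞} ‖ζ(t)‖ ≤ √(ϖ(Q)) · ‖QD‖ · limsup_{t→∞} ‖φ(t)‖. (Input-to-state stability estimate (40)–(41) established in the proof of Lemma 2 of the paper, with D = W ⊗ BM.) -/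
open Filter Matrix Kronecker

open RealInnerProductSpace

lemma aux_decay (v w : ℝ → ℝ) (γ T₀ M : ℝ) {s t : ℝ} (hs : T₀ ≤ s) (hst : s ≤ t)
    (hd : ∀ x, T₀ ≤ x → HasDerivAt v (w x) x)
    (hw : ∀ x, T₀ ≤ x → M < v x → w x ≤ -γ)
    (hgt : ∀ x ∈ Set.Ioc s t, M < v x) :
    v t + γ * t ≤ v s + γ * s := by
  have hg : ∀ x, T₀ ≤ x → HasDerivAt (fun y => v y + γ * y) (w x + γ * 1) x := by
    intro x hx
    exact (hd x hx).add ((hasDerivAt_id x).const_mul γ)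
  have hmono : AntitoneOn (fun y => v y + γ * y) (Set.Icc s t) := by
    apply antitoneOn_of_deriv_nonpos (convex_Icc s t)
    · intro x hx
      exact (hg x (hs.trans hx.1)).continuousAt.continuousWithinAt
    · intro x hx
      rw [interior_Icc] at hx
      exact (hg x (hs.trans hx.1.le)).differentiableAt.differentiableWithinAt
    · intro x hx
      rw [interior_Icc] at hx
      rw [(hg x (hs.trans hx.1.le)).deriv]
      have := hw x (hs.trans hx.1.le) (hgt x ⟨hx.1, hx.2.le⟩)
      linarith
  exact hmono (Set.left_mem_Icc.2 hst) (Set.right_mem_Icc.2 hst) hst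

lemma aux_barrier (v w : ℝ → ℝ) (T₀ M γ : ℝ) (hγ : 0 < γ)
    (hd : ∀ t, T₀ ≤ t → HasDerivAt v (w t) t)
    (hw : ∀ t, T₀ ≤ t → M < v t → w t ≤ -γ)
    (hv0 : ∀ t, T₀ ≤ t → 0 ≤ v t) :
    ∀ᶠ t in atTop, v t ≤ M := by
  have h1 : ∃ t₁, T₀ ≤ t₁ ∧ v t₁ ≤ M := by
    by_contra h
    push_neg at h
    set t := max T₀ (T₀ + (v T₀ + 1) / γ) with ht
    have h1 : T₀ ≤ t := le_max_left _ _
    have h2 : T₀ + (v T₀ + 1) / γ ≤ t := le_max_right _ _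
    have key := aux_decay v w γ T₀ M le_rfl h1 hd hw
      (fun x hx => h x (le_of_lt hx.1))
    have h3 : (v T₀ + 1) / γ ≤ t - T₀ := by linarith
    have h4 : v T₀ + 1 ≤ γ * (t - T₀) := by
      rw [div_le_iff₀ hγ] at h3
      linarith [mul_comm (t - T₀) γ]
    have := hv0 t h1
    nlinarith
  obtain ⟨t₁, ht₁, hvt₁⟩ := h1
  rw [eventually_atTop]
  refine ⟨t₁, fun t₂ ht₂ => ?_⟩
  by_contra hcon
  push_neg at hcon
  have ht₁₂ : t₁ < t₂ := by
    rcases eq_or_lt_of_le ht₂ with h | h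
    · exact absurd (h ▸ hvt₁) (not_le.2 hcon)
    · exact h
  set S := Set.Icc t₁ t₂ ∩ v ⁻¹' Set.Iic M with hS
  have hSne : S.Nonempty := ⟨t₁, ⟨le_rfl, ht₂⟩, hvt₁⟩
  have hSbdd : BddAbove S := ⟨t₂, fun x hx => hx.1.2⟩
  have hScl : IsClosed S := by
    apply ContinuousOn.preimage_isClosed_of_isClosed ?_ isClosed_Icc isClosed_Iic
    intro x hx
    exact (hd x (ht₁.trans hx.1)).continuousAt.continuousWithinAt
  set s₀ := sSup S with hs₀
  have hs₀mem : s₀ ∈ S := hScl.csSup_mem hSne hSbdd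
  have hs₀le : v s₀ ≤ M := hs₀mem.2
  have hs₀lt : s₀ < t₂ := by
    rcases eq_or_lt_of_le hs₀mem.1.2 with h | h
    · exact absurd (h ▸ hs₀le) (not_le.2 hcon)
    · exact h
  have hIoc : ∀ x ∈ Set.Ioc s₀ t₂, M < v x := by
    intro x hx
    by_contra hxle
    push_neg at hxle
    have hxS : x ∈ S := ⟨⟨hs₀mem.1.1.trans hx.1.le, hx.2⟩, hxle⟩
    exact absurd (le_csSup hSbdd hxS) (not_le.2 hx.1)
  have key := aux_decay v w γ T₀ M (ht₁.trans hs₀mem.1.1) hs₀lt.le hd hw hIoc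
  nlinarith [mul_pos hγ (sub_pos.2 hs₀lt)]


lemma aux_quadform (m : ℕ) [NeZero m] (Q : Matrix (Fin m) (Fin m) ℝ) (hQpos : Q.PosDef) :
    0 < eigMin Q ∧ eigMin Q ≤ eigMax Q ∧
    ∀ x : EuclideanSpace ℝ (Fin m),
      eigMin Q * ‖x‖ ^ 2 ≤ ⟪x, Matrix.toEuclideanLin Q x⟫ ∧
      ⟪x, Matrix.toEuclideanLin Q x⟫ ≤ eigMax Q * ‖x‖ ^ 2 := by
  have hA : Q.IsHermitian := hQpos.1
  set B := hA.eigenvectorBasis with hB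
  set lam := hA.eigenvalues with hlam
  have hTB : ∀ j, Matrix.toEuclideanLin Q (B j) = lam j • B j := by
    intro j
    apply (WithLp.equiv 2 (Fin m → ℝ)).injective
    simpa [Matrix.ofLp_toEuclideanLin_apply] using hA.mulVec_eigenvectorBasis j
  have hsymm : LinearMap.IsSymmetric (Matrix.toEuclideanLin Q) :=
    Matrix.isHermitian_iff_isSymmetric.1 hA
  have hrange : spectrum ℝ Q = Set.range lam := by
    apply Set.Subset.antisymm
    · intro μ hμ
      have hμ' : μ ∈ spectrum ℝ (Matrix.toEuclideanLin Q) := by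
        rw [Matrix.spectrum_toEuclideanLin]; exact hμ
      have heig : Module.End.HasEigenvalue (Matrix.toEuclideanLin Q) μ :=
        Module.End.hasEigenvalue_iff_mem_spectrum.2 hμ'
      obtain ⟨v, hv⟩ := heig.exists_hasEigenvector
      have hex : ∃ j, ⟪B j, v⟫ ≠ 0 := by
        by_contra hall
        push_neg at hall
        apply hv.2
        have hrepr : B.repr v = 0 := by
          ext j
          simpa [OrthonormalBasis.repr_apply_apply] using hall j
        exact B.repr.map_eq_zero_iff.1 hrepr
      obtain ⟨j, hj⟩ := hex
      have h1 : ⟪B j, Matrix.toEuclideanLin Q v⟫ = μ * ⟪B j, v⟫ := by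
        rw [hv.apply_eq_smul, real_inner_smul_right]
      have h2 : ⟪B j, Matrix.toEuclideanLin Q v⟫ = lam j * ⟪B j, v⟫ := by
        rw [← hsymm (B j) v, hTB j, real_inner_smul_left]
      refine ⟨j, ?_⟩
      have := h1.symm.trans h2
      exact (mul_right_cancel₀ hj this).symm
    · rintro μ ⟨j, rfl⟩
      exact hA.eigenvalues_mem_spectrum_real j
  have hne : (spectrum ℝ Q).Nonempty := by
    rw [hrange]; exact Set.range_nonempty _
  have hfin : (spectrum ℝ Q).Finite := by
    rw [hrange]; exact Set.finite_range _
  have hbddA : BddAbove (spectrum ℝ Q) := hfin.bddAbove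
  have hbddB : BddBelow (spectrum ℝ Q) := hfin.bddBelow
  have hmem : ∀ j, eigMin Q ≤ lam j ∧ lam j ≤ eigMax Q := fun j =>
    ⟨csInf_le hbddB (hA.eigenvalues_mem_spectrum_real j),
     le_csSup hbddA (hA.eigenvalues_mem_spectrum_real j)⟩
  have hminmem : eigMin Q ∈ spectrum ℝ Q := hne.csInf_mem hfin
  obtain ⟨j₀, hj₀⟩ := hrange ▸ hminmem
  have ha0 : 0 < eigMin Q := hj₀ ▸ hQpos.eigenvalues_pos j₀
  refine ⟨ha0, (hmem j₀).1.trans ((hj₀ ▸ (hmem j₀).2 : _)), ?_⟩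
  intro x
  have hexp : ⟪x, Matrix.toEuclideanLin Q x⟫ = ∑ j, lam j * ⟪B j, x⟫ ^ 2 := by
    rw [← B.sum_inner_mul_inner x (Matrix.toEuclideanLin Q x)]
    congr 1
    ext j
    rw [← hsymm (B j) x, hTB j, real_inner_smul_left, real_inner_comm x (B j)]
    ring
  have hnorm : ‖x‖ ^ 2 = ∑ j, ⟪B j, x⟫ ^ 2 := by
    rw [← real_inner_self_eq_norm_sq, ← B.sum_inner_mul_inner x x]
    congr 1
    ext j
    rw [real_inner_comm x (B j)]
    ring
  constructor
  · rw [hexp, hnorm, Finset.mul_sum]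
    apply Finset.sum_le_sum
    intro j _
    exact mul_le_mul_of_nonneg_right (hmem j).1 (sq_nonneg _)
  · rw [hexp, hnorm, Finset.mul_sum]
    apply Finset.sum_le_sum
    intro j _
    exact mul_le_mul_of_nonneg_right (hmem j).2 (sq_nonneg _)


lemma aux_adj {p q : ℕ} (M : Matrix (Fin p) (Fin q) ℝ) (x : EuclideanSpace ℝ (Fin q))
    (y : EuclideanSpace ℝ (Fin p)) :
    ⟪Matrix.toEuclideanLin M x, y⟫ = ⟪x, Matrix.toEuclideanLin Mᵀ y⟫ := by
  simp only [PiLp.inner_apply, RCLike.inner_apply, starRingEnd_apply, star_trivial,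
    Matrix.toEuclideanLin_apply]
  have h1 : ∑ i, y.ofLp i * (M *ᵥ x.ofLp) i = y.ofLp ⬝ᵥ (M *ᵥ x.ofLp) := rfl
  have h2 : ∑ i, (Mᵀ *ᵥ y.ofLp) i * x.ofLp i = (Mᵀ *ᵥ y.ofLp) ⬝ᵥ x.ofLp := rfl
  rw [h1, h2, Matrix.dotProduct_mulVec, Matrix.mulVec_transpose]

lemma aux_mul {p q r : ℕ} (M : Matrix (Fin p) (Fin q) ℝ) (N : Matrix (Fin q) (Fin r) ℝ)
    (x : EuclideanSpace ℝ (Fin r)) :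
    Matrix.toEuclideanLin (M * N) x = Matrix.toEuclideanLin M (Matrix.toEuclideanLin N x) := by
  simp [Matrix.toEuclideanLin_apply, Matrix.mulVec_mulVec]

set_option maxHeartbeats 1000000 in
/-- Input-to-state stability estimate (40)–(41) from the proof of Lemma 2: if `Q = Qᵀ > 0`
solves `QA_ζ + A_ζᵀQ = −2I` and `ζ' = A_ζ ζ + Dφ` with `φ` continuous and bounded, then
`limsup ‖ζ‖ ≤ √(ϖ(Q))·‖QD‖·limsup ‖φ‖`. -/
theorem stmt9 (m k : ℕ) (Aζ : Matrix (Fin m) (Fin m) ℝ) (D : Matrix (Fin m) (Fin k) ℝ)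
    (Q : Matrix (Fin m) (Fin m) ℝ) (hQsymm : Q.IsSymm) (hQpos : Q.PosDef)
    (hlyap : Q * Aζ + Aζᵀ * Q = -((2 : ℝ) • (1 : Matrix (Fin m) (Fin m) ℝ)))
    (φ : ℝ → EuclideanSpace ℝ (Fin k)) (hφc : ContinuousOn φ (Set.Ici (0 : ℝ)))
    (hφb : ∃ c : ℝ, ∀ t, 0 ≤ t → ‖φ t‖ ≤ c)
    (ζ : ℝ → EuclideanSpace ℝ (Fin m))
    (hζ : ∀ t, 0 ≤ t → HasDerivAt ζ
      (Matrix.toEuclideanLin Aζ (ζ t) + Matrix.toEuclideanLin D (φ t)) t) :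
    limsup (fun t => ‖ζ t‖) atTop ≤
      Real.sqrt (varpi Q) * opNorm (Q * D) * limsup (fun t => ‖φ t‖) atTop := by
  have hφbdd : IsBoundedUnder (· ≤ ·) atTop fun t => ‖φ t‖ := by
    obtain ⟨c, hc⟩ := hφb
    refine ⟨c, eventually_map.2 ?_⟩
    filter_upwards [eventually_ge_atTop (0 : ℝ)] with t ht using hc t ht
  have hL0 : 0 ≤ limsup (fun t => ‖φ t‖) atTop :=
    le_limsup_of_frequently_le
      ((Eventually.of_forall fun t => norm_nonneg (φ t)).frequently) hφbdd
  rcases Nat.eq_zero_or_pos m with hm | hm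
  · subst hm
    have hz : (fun t => ‖ζ t‖) = fun _ => (0 : ℝ) := by
      funext t
      simp [EuclideanSpace.norm_eq]
    rw [hz, limsup_const]
    exact mul_nonneg (mul_nonneg (Real.sqrt_nonneg _) (norm_nonneg _)) hL0
  haveI : NeZero m := ⟨hm.ne'⟩
  obtain ⟨ha0, hab, hquad⟩ := aux_quadform m Q hQpos
  set a := eigMin Q with ha
  set b := eigMax Q with hb
  set K := opNorm (Q * D) with hKdef
  set L := limsup (fun t => ‖φ t‖) atTop with hL
  have hb0 : 0 < b := lt_of_lt_of_le ha0 hab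
  have hK0 : 0 ≤ K := norm_nonneg _
  -- operator norm bound
  have hKb : ∀ u : EuclideanSpace ℝ (Fin k), ‖Matrix.toEuclideanLin (Q * D) u‖ ≤ K * ‖u‖ :=
    fun u => (LinearMap.toContinuousLinearMap (Matrix.toEuclideanLin (Q * D))).le_opNorm u
  -- the key derivative identity
  have key1 : ∀ (z : EuclideanSpace ℝ (Fin m)) (u : EuclideanSpace ℝ (Fin k)),
      ⟪z, Matrix.toEuclideanLin Q (Matrix.toEuclideanLin Aζ z + Matrix.toEuclideanLin D u)⟫
        + ⟪Matrix.toEuclideanLin Aζ z + Matrix.toEuclideanLin D u, Matrix.toEuclideanLin Q z⟫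
      = -(2 : ℝ) * ‖z‖ ^ 2 + 2 * ⟪z, Matrix.toEuclideanLin (Q * D) u⟫ := by
    intro z u
    have e1 : ⟪Matrix.toEuclideanLin Aζ z, Matrix.toEuclideanLin Q z⟫
        = ⟪z, Matrix.toEuclideanLin (Aζᵀ * Q) z⟫ := by
      rw [aux_adj, ← aux_mul]
    have e2 : ⟪z, Matrix.toEuclideanLin Q (Matrix.toEuclideanLin Aζ z)⟫
        = ⟪z, Matrix.toEuclideanLin (Q * Aζ) z⟫ := by rw [← aux_mul]
    have e3 : ⟪Matrix.toEuclideanLin D u, Matrix.toEuclideanLin Q z⟫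
        = ⟪z, Matrix.toEuclideanLin (Q * D) u⟫ := by
      rw [aux_adj, ← aux_mul, real_inner_comm, aux_adj, Matrix.transpose_mul,
        Matrix.transpose_transpose, hQsymm.eq]
    have e4 : ⟪z, Matrix.toEuclideanLin Q (Matrix.toEuclideanLin D u)⟫
        = ⟪z, Matrix.toEuclideanLin (Q * D) u⟫ := by rw [← aux_mul]
    have e5 : ⟪z, Matrix.toEuclideanLin (Q * Aζ) z⟫ + ⟪z, Matrix.toEuclideanLin (Aζᵀ * Q) z⟫
        = -(2 : ℝ) * ‖z‖ ^ 2 := by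
      rw [← inner_add_right]
      have hadd : Matrix.toEuclideanLin (Q * Aζ) z + Matrix.toEuclideanLin (Aζᵀ * Q) z
          = Matrix.toEuclideanLin (Q * Aζ + Aζᵀ * Q) z := by
        rw [map_add]; rfl
      rw [hadd, hlyap]
      have hneg : Matrix.toEuclideanLin (-((2 : ℝ) • (1 : Matrix (Fin m) (Fin m) ℝ))) z
          = -((2 : ℝ) • z) := by
        have : Matrix.toEuclideanLin (-((2 : ℝ) • (1 : Matrix (Fin m) (Fin m) ℝ)))
            = -((2 : ℝ) • Matrix.toEuclideanLin (1 : Matrix (Fin m) (Fin m) ℝ)) := by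
          rw [map_neg, _root_.map_smul]
        rw [this]
        simp [Matrix.toEuclideanLin_apply]
      rw [hneg, inner_neg_right, real_inner_smul_right, real_inner_self_eq_norm_sq]
      ring
    have hQadd : Matrix.toEuclideanLin Q (Matrix.toEuclideanLin Aζ z + Matrix.toEuclideanLin D u)
        = Matrix.toEuclideanLin Q (Matrix.toEuclideanLin Aζ z)
          + Matrix.toEuclideanLin Q (Matrix.toEuclideanLin D u) := map_add _ _ _
    rw [hQadd, inner_add_right, inner_add_left, e1, e2, e3, e4]
    linarith [e5]
  -- Lyapunov function and its derivative
  set v : ℝ → ℝ := fun t => ⟪ζ t, Matrix.toEuclideanLin Q (ζ t)⟫ with hvdef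
  set w : ℝ → ℝ := fun t =>
    -(2 : ℝ) * ‖ζ t‖ ^ 2 + 2 * ⟪ζ t, Matrix.toEuclideanLin (Q * D) (φ t)⟫ with hwdef
  have hdv : ∀ t, 0 ≤ t → HasDerivAt v (w t) t := by
    intro t ht
    have h1 : HasDerivAt (fun s => Matrix.toEuclideanLin Q (ζ s))
        (Matrix.toEuclideanLin Q
          (Matrix.toEuclideanLin Aζ (ζ t) + Matrix.toEuclideanLin D (φ t))) t := by
      have := (LinearMap.toContinuousLinearMap (Matrix.toEuclideanLin Q)).hasFDerivAt.comp_hasDerivAt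
        t (hζ t ht)
      exact this
    have h2 := HasDerivAt.inner ℝ (hζ t ht) h1
    have h3 := key1 (ζ t) (φ t)
    have h4 : ⟪ζ t, Matrix.toEuclideanLin Q
          (Matrix.toEuclideanLin Aζ (ζ t) + Matrix.toEuclideanLin D (φ t))⟫
        + ⟪Matrix.toEuclideanLin Aζ (ζ t) + Matrix.toEuclideanLin D (φ t),
            Matrix.toEuclideanLin Q (ζ t)⟫ = w t := h3
    rw [h4] at h2
    exact h2
  -- quadratic form bounds along the solution
  have hva : ∀ t, a * ‖ζ t‖ ^ 2 ≤ v t := fun t => (hquad (ζ t)).1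
  have hvb : ∀ t, v t ≤ b * ‖ζ t‖ ^ 2 := fun t => (hquad (ζ t)).2
  have hv0 : ∀ t, 0 ≤ v t := fun t =>
    le_trans (by positivity) (hva t)
  -- the ε-argument
  have main : ∀ ε : ℝ, 0 < ε →
      limsup (fun t => ‖ζ t‖) atTop ≤ Real.sqrt ((b * (K * (L + ε)) ^ 2 + ε) / a) := by
    intro ε hε
    set R := K * (L + ε) with hR
    have hR0 : 0 ≤ R := mul_nonneg hK0 (by linarith)
    set M := b * R ^ 2 + ε with hM
    set ρ := Real.sqrt (R ^ 2 + ε / b) with hρ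
    have hρR : R < ρ := by
      have h1 : R = Real.sqrt (R ^ 2) := (Real.sqrt_sq hR0).symm
      rw [h1, hρ]
      apply Real.sqrt_lt_sqrt (sq_nonneg R)
      have : 0 < ε / b := div_pos hε hb0
      linarith
    set γ := 2 * ρ * (ρ - R) with hγdef
    have hγ : 0 < γ := by nlinarith
    have hev : ∀ᶠ t in atTop, ‖φ t‖ < L + ε :=
      eventually_lt_of_limsup_lt (by linarith) hφbdd
    obtain ⟨T₀', hT₀'⟩ := eventually_atTop.1 hev
    set T₀ := max T₀' 0 with hT₀def
    have hT0 : (0 : ℝ) ≤ T₀ := le_max_right _ _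
    have hφle : ∀ t, T₀ ≤ t → ‖φ t‖ ≤ L + ε :=
      fun t ht => (hT₀' t ((le_max_left _ _).trans ht)).le
    have hd' : ∀ t, T₀ ≤ t → HasDerivAt v (w t) t := fun t ht => hdv t (hT0.trans ht)
    have hv0' : ∀ t, T₀ ≤ t → 0 ≤ v t := fun t _ => hv0 t
    have hwle : ∀ t, T₀ ≤ t → M < v t → w t ≤ -γ := by
      intro t ht hMv
      have h1 : v t ≤ b * ‖ζ t‖ ^ 2 := hvb t
      have h2 : R ^ 2 + ε / b < ‖ζ t‖ ^ 2 := by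
        have hbx : b * (R ^ 2 + ε / b) < b * ‖ζ t‖ ^ 2 := by
          have : b * (R ^ 2 + ε / b) = b * R ^ 2 + ε := by field_simp
          rw [this]
          calc b * R ^ 2 + ε = M := hM.symm
            _ < v t := hMv
            _ ≤ b * ‖ζ t‖ ^ 2 := h1
        exact lt_of_mul_lt_mul_left hbx hb0.le
      have h3 : ρ ≤ ‖ζ t‖ := by
        have : ‖ζ t‖ = Real.sqrt (‖ζ t‖ ^ 2) := (Real.sqrt_sq (norm_nonneg _)).symm
        rw [this, hρ]
        exact Real.sqrt_le_sqrt h2.le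
      have h4 : ⟪ζ t, Matrix.toEuclideanLin (Q * D) (φ t)⟫ ≤ ‖ζ t‖ * R := by
        calc ⟪ζ t, Matrix.toEuclideanLin (Q * D) (φ t)⟫
            ≤ ‖ζ t‖ * ‖Matrix.toEuclideanLin (Q * D) (φ t)‖ := real_inner_le_norm _ _
          _ ≤ ‖ζ t‖ * (K * ‖φ t‖) :=
              mul_le_mul_of_nonneg_left (hKb (φ t)) (norm_nonneg _)
          _ ≤ ‖ζ t‖ * R := by
              apply mul_le_mul_of_nonneg_left _ (norm_nonneg _)
              rw [hR]
              exact mul_le_mul_of_nonneg_left (hφle t ht) hK0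
      show -(2 : ℝ) * ‖ζ t‖ ^ 2 + 2 * ⟪ζ t, Matrix.toEuclideanLin (Q * D) (φ t)⟫ ≤ -γ
      rw [hγdef]
      have h5 : 0 ≤ (‖ζ t‖ - ρ) * (‖ζ t‖ + ρ - R) :=
        mul_nonneg (sub_nonneg.2 h3) (by nlinarith)
      nlinarith [h5]
    have hbar := aux_barrier v w T₀ M γ hγ hd' hwle hv0'
    have hfin : ∀ᶠ t in atTop, ‖ζ t‖ ≤ Real.sqrt ((b * (K * (L + ε)) ^ 2 + ε) / a) := by
      filter_upwards [hbar] with t htv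
      have h1 : a * ‖ζ t‖ ^ 2 ≤ M := le_trans (hva t) htv
      have h2 : ‖ζ t‖ ^ 2 ≤ M / a := (le_div_iff₀ ha0).2 (by linarith [mul_comm a (‖ζ t‖ ^ 2)])
      calc ‖ζ t‖ = Real.sqrt (‖ζ t‖ ^ 2) := (Real.sqrt_sq (norm_nonneg _)).symm
        _ ≤ Real.sqrt ((b * (K * (L + ε)) ^ 2 + ε) / a) := Real.sqrt_le_sqrt (by rw [← hR, ← hM]; exact h2)
    exact limsup_le_of_le (isCoboundedUnder_le_of_le atTop (fun t => norm_nonneg (ζ t))) hfin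
  -- pass to the limit ε → 0⁺
  have htend : Tendsto (fun ε : ℝ => Real.sqrt ((b * (K * (L + ε)) ^ 2 + ε) / a))
      (nhdsWithin 0 (Set.Ioi 0)) (nhds (Real.sqrt ((b * (K * (L + 0)) ^ 2 + 0) / a))) := by
    apply Tendsto.mono_left _ nhdsWithin_le_nhds
    apply ContinuousAt.tendsto
    apply Real.continuous_sqrt.continuousAt.comp
    fun_prop
  have hle : limsup (fun t => ‖ζ t‖) atTop ≤ Real.sqrt ((b * (K * (L + 0)) ^ 2 + 0) / a) :=
    ge_of_tendsto htend (eventually_nhdsWithin_of_forall fun ε hε => main ε hε)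
  have heq : Real.sqrt ((b * (K * (L + 0)) ^ 2 + 0) / a) = Real.sqrt (varpi Q) * K * L := by
    have h1 : (b * (K * (L + 0)) ^ 2 + 0) / a = (b / a) * (K * L) ^ 2 := by
      field_simp
      ring
    rw [h1, Real.sqrt_mul (div_nonneg hb0.le ha0.le),
      Real.sqrt_sq (mul_nonneg hK0 hL0)]
    have : varpi Q = b / a := rfl
    rw [this]
    ring
  rw [heq] at hle
  exact hle
end
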